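/- arXiv:1912.02392 — 4 statements merged into one kernel-verified Lean document; each statement's English description precedes it below -/
import Mathlib

section
/- Let A be a 2^m × 2^n matrix and B a 2^{M−m} × 2^{N−n} matrix, and let 0 ≤ m' ≤ M, 0 ≤ n' ≤ N. Then the spectral norm of the rearrangement of A⊗B under configuration (m',n') factorizes: ‖R_{m',n'}[A⊗B]‖_S = ‖R_{m∧m', n∧n'}[A]‖_S · ‖R_{(m'−m)₊, (n'−n)₊}[B]‖_S, where x₊ = max(x,0). -/
open Matrix

/-- Euclidean norm of a real vector. -/
noncomputable def vnorm {n : Type*} [Fintype n] (v : n → ℝ) : ℝ :=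
  Real.sqrt (∑ i, v i ^ 2)

/-- Spectral (operator) norm of a real matrix. -/
noncomputable def specNorm {m n : Type*} [Fintype m] [Fintype n] (M : Matrix m n ℝ) : ℝ :=
  sSup {x | ∃ u : n → ℝ, vnorm u = 1 ∧ x = vnorm (M.mulVec u)}

/-- Quotient index `i ↦ i / 2^(Mtot - a)` for `i < 2^Mtot`, `a ≤ Mtot`. -/
def pdiv {Mtot a : ℕ} (h : a ≤ Mtot) (i : Fin (2 ^ Mtot)) : Fin (2 ^ a) :=
  ⟨(i : ℕ) / 2 ^ (Mtot - a), by
    have h2 : (2:ℕ) ^ Mtot = 2 ^ a * 2 ^ (Mtot - a) := by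
      rw [← pow_add, Nat.add_sub_cancel' h]
    have hi : (i : ℕ) < 2 ^ a * 2 ^ (Mtot - a) := i.2.trans_eq h2
    exact (Nat.div_lt_iff_lt_mul (pow_pos (by norm_num) _)).2 hi⟩

/-- Remainder index `i ↦ i % 2^(Mtot - a)` for `i < 2^Mtot`. -/
def pmod {Mtot a : ℕ} (i : Fin (2 ^ Mtot)) : Fin (2 ^ (Mtot - a)) :=
  ⟨(i : ℕ) % 2 ^ (Mtot - a), Nat.mod_lt _ (pow_pos (by norm_num) _)⟩

/-- Combine a block index and an in-block index into an index of `Fin (2^Mtot)`. -/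
def pcomb {Mtot a : ℕ} (h : a ≤ Mtot) (i : Fin (2 ^ a)) (j : Fin (2 ^ (Mtot - a))) :
    Fin (2 ^ Mtot) :=
  ⟨(i : ℕ) * 2 ^ (Mtot - a) + (j : ℕ), by
    have h2 : (2:ℕ) ^ Mtot = 2 ^ a * 2 ^ (Mtot - a) := by
      rw [← pow_add, Nat.add_sub_cancel' h]
    have hi := i.2
    have hj := j.2
    calc (i : ℕ) * 2 ^ (Mtot - a) + (j : ℕ)
        < (i : ℕ) * 2 ^ (Mtot - a) + 2 ^ (Mtot - a) := by omega
      _ = ((i : ℕ) + 1) * 2 ^ (Mtot - a) := by ring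
      _ ≤ 2 ^ a * 2 ^ (Mtot - a) := Nat.mul_le_mul_right _ hi
      _ = 2 ^ Mtot := h2.symm⟩

/-- The rearrangement operator `R_{a,b}` for a `2^Mtot × 2^Ntot` matrix:
partition into a `2^a × 2^b` array of `2^(Mtot-a) × 2^(Ntot-b)` blocks and make
each vectorized block a row. -/
def rearr {Mtot Ntot : ℕ} {a b : ℕ} (ha : a ≤ Mtot) (hb : b ≤ Ntot)
    (C : Matrix (Fin (2 ^ Mtot)) (Fin (2 ^ Ntot)) ℝ) :
    Matrix (Fin (2 ^ a) × Fin (2 ^ b)) (Fin (2 ^ (Mtot - a)) × Fin (2 ^ (Ntot - b))) ℝ :=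
  fun p q => C (pcomb ha p.1 q.1) (pcomb hb p.2 q.2)

/-- The Kronecker product `A ⊗ B` of a `2^m × 2^n` matrix `A` and a
`2^(Mtot-m) × 2^(Ntot-n)` matrix `B`, as a `2^Mtot × 2^Ntot` matrix. -/
def pkron {Mtot Ntot m n : ℕ} (hm : m ≤ Mtot) (hn : n ≤ Ntot)
    (A : Matrix (Fin (2 ^ m)) (Fin (2 ^ n)) ℝ)
    (B : Matrix (Fin (2 ^ (Mtot - m))) (Fin (2 ^ (Ntot - n))) ℝ) :
    Matrix (Fin (2 ^ Mtot)) (Fin (2 ^ Ntot)) ℝ :=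
  fun i j => A (pdiv hm i) (pdiv hn j) * B (pmod i) (pmod j)

section helpers
variable {ι κ : Type*} [Fintype ι] [Fintype κ]

lemma vnorm_nonneg (v : ι → ℝ) : 0 ≤ vnorm v := Real.sqrt_nonneg _

lemma vnorm_sq (v : ι → ℝ) : vnorm v ^ 2 = ∑ i, v i ^ 2 :=
  Real.sq_sqrt (Finset.sum_nonneg fun i _ => sq_nonneg _)

lemma vnorm_smul (c : ℝ) (v : ι → ℝ) : vnorm (c • v) = |c| * vnorm v := by
  unfold vnorm
  rw [← Real.sqrt_sq_eq_abs, ← Real.sqrt_mul (sq_nonneg c), Finset.mul_sum]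
  congr 1
  exact Finset.sum_congr rfl fun i _ => by simp [mul_pow]

lemma vnorm_eq_zero {v : ι → ℝ} (h : vnorm v = 0) : v = 0 := by
  have h0 : ∑ i, v i ^ 2 = 0 := by
    have := Real.sqrt_eq_zero'.1 h
    have hn : 0 ≤ ∑ i, v i ^ 2 := Finset.sum_nonneg fun i _ => sq_nonneg _
    linarith
  funext i
  have := (Finset.sum_eq_zero_iff_of_nonneg (fun i _ => sq_nonneg (v i))).1 h0 i (Finset.mem_univ i)
  exact pow_eq_zero_iff (n := 2) (by norm_num) |>.1 this

lemma vnorm_prod (u : ι → ℝ) (v : κ → ℝ) :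
    vnorm (fun p : ι × κ => u p.1 * v p.2) = vnorm u * vnorm v := by
  unfold vnorm
  rw [← Real.sqrt_mul (Finset.sum_nonneg fun i _ => sq_nonneg _)]
  congr 1
  rw [Fintype.sum_prod_type, Finset.sum_mul]
  refine Finset.sum_congr rfl fun i _ => ?_
  rw [Finset.mul_sum]
  exact Finset.sum_congr rfl fun j _ => by ring

end helpers

section spec
variable {ι κ : Type*} [Fintype ι] [Fintype κ]

lemma specSet_bdd (M : Matrix ι κ ℝ) :
    BddAbove {x | ∃ u : κ → ℝ, vnorm u = 1 ∧ x = vnorm (M.mulVec u)} := by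
  refine ⟨Real.sqrt (∑ i, ∑ j, M i j ^ 2), ?_⟩
  rintro x ⟨u, hu, rfl⟩
  unfold vnorm
  apply Real.sqrt_le_sqrt
  have hu2 : ∑ j, u j ^ 2 = 1 := by
    have := vnorm_sq u; rw [hu] at this; linarith
  calc ∑ i, M.mulVec u i ^ 2
      ≤ ∑ i, (∑ j, M i j ^ 2) * (∑ j, u j ^ 2) := by
        refine Finset.sum_le_sum fun i _ => ?_
        exact Finset.sum_mul_sq_le_sq_mul_sq _ _ _
    _ = ∑ i, ∑ j, M i j ^ 2 := by
        refine Finset.sum_congr rfl fun i _ => by rw [hu2, mul_one]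

lemma specSet_nonempty [Nonempty κ] (M : Matrix ι κ ℝ) :
    Set.Nonempty {x | ∃ u : κ → ℝ, vnorm u = 1 ∧ x = vnorm (M.mulVec u)} := by
  obtain ⟨j0⟩ := ‹Nonempty κ›
  classical
  refine ⟨_, Pi.single j0 1, ?_, rfl⟩
  unfold vnorm
  have : ∑ i, Pi.single (M := fun _ : κ => ℝ) j0 1 i ^ 2 = 1 := by
    rw [Finset.sum_eq_single j0]
    · simp
    · intro b _ hb; simp [Pi.single_apply, hb]
    · simp
  rw [this, Real.sqrt_one]

lemma le_specNorm (M : Matrix ι κ ℝ) (u : κ → ℝ) (h : vnorm u = 1) :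
    vnorm (M.mulVec u) ≤ specNorm M :=
  le_csSup (specSet_bdd M) ⟨u, h, rfl⟩

lemma specNorm_nonneg [Nonempty κ] (M : Matrix ι κ ℝ) : 0 ≤ specNorm M := by
  obtain ⟨x, u, hu, rfl⟩ := specSet_nonempty M
  exact (vnorm_nonneg _).trans (le_specNorm M u hu)

lemma vnorm_mulVec_le [Nonempty κ] (M : Matrix ι κ ℝ) (u : κ → ℝ) :
    vnorm (M.mulVec u) ≤ specNorm M * vnorm u := by
  rcases eq_or_ne (vnorm u) 0 with h | h
  · have h0 : vnorm (0 : ι → ℝ) = 0 := by unfold vnorm; simp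
    have h0' : vnorm (0 : κ → ℝ) = 0 := by unfold vnorm; simp
    rw [vnorm_eq_zero h, mulVec_zero, h0, h0', mul_zero]
  · have hc : 0 < vnorm u := lt_of_le_of_ne (vnorm_nonneg u) (Ne.symm h)
    set c := vnorm u
    have h1 : vnorm ((c⁻¹) • u) = 1 := by
      rw [vnorm_smul, abs_of_pos (inv_pos.2 hc), inv_mul_cancel₀ h]
    have h2 := le_specNorm M _ h1
    rw [mulVec_smul, vnorm_smul, abs_of_pos (inv_pos.2 hc)] at h2
    calc vnorm (M.mulVec u) = c * (c⁻¹ * vnorm (M.mulVec u)) := by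
          field_simp
      _ ≤ c * specNorm M := by
          exact mul_le_mul_of_nonneg_left h2 hc.le
      _ = specNorm M * c := mul_comm _ _

lemma specNorm_le_of_forall [Nonempty κ] (M : Matrix ι κ ℝ) {C : ℝ}
    (h : ∀ u : κ → ℝ, vnorm u = 1 → vnorm (M.mulVec u) ≤ C) : specNorm M ≤ C := by
  refine csSup_le (specSet_nonempty M) ?_
  rintro x ⟨u, hu, rfl⟩
  exact h u hu

end spec

section reindex
variable {I I' J J' : Type*} [Fintype I] [Fintype I'] [Fintype J] [Fintype J']

lemma vnorm_comp_equiv {ι ι' : Type*} [Fintype ι] [Fintype ι'] (e : ι' ≃ ι) (v : ι → ℝ) :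
    vnorm (fun i => v (e i)) = vnorm v := by
  unfold vnorm
  congr 1
  exact Equiv.sum_comp e (fun i => v i ^ 2)

lemma specSet_reindex_subset (M : Matrix I J ℝ) (e : I' ≃ I) (f : J' ≃ J) :
    {x | ∃ u : J' → ℝ, vnorm u = 1 ∧
        x = vnorm ((Matrix.of fun i j => M (e i) (f j)).mulVec u)} ⊆
    {x | ∃ u : J → ℝ, vnorm u = 1 ∧ x = vnorm (M.mulVec u)} := by
  rintro x ⟨u, hu, rfl⟩
  refine ⟨fun j => u (f.symm j), ?_, ?_⟩
  · rw [← hu]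
    exact vnorm_comp_equiv f.symm u
  · have hmv : ∀ i', (Matrix.of fun i j => M (e i) (f j)).mulVec u i'
        = M.mulVec (fun j => u (f.symm j)) (e i') := by
      intro i'
      simp only [Matrix.mulVec, dotProduct]
      rw [← Equiv.sum_comp f (fun j => M (e i') j * u (f.symm j))]
      simp
    have : (Matrix.of fun i j => M (e i) (f j)).mulVec u
        = fun i' => M.mulVec (fun j => u (f.symm j)) (e i') := funext hmv
    rw [this, vnorm_comp_equiv e]

lemma specNorm_reindex (M : Matrix I J ℝ) (e : I' ≃ I) (f : J' ≃ J) :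
    specNorm (Matrix.of fun i j => M (e i) (f j)) = specNorm M := by
  unfold specNorm
  congr 1
  apply Set.Subset.antisymm
  · exact specSet_reindex_subset M e f
  · have h2 := specSet_reindex_subset (Matrix.of fun i j => M (e i) (f j)) e.symm f.symm
    simp only [Matrix.of_apply, Equiv.apply_symm_apply] at h2
    exact h2

end reindex

lemma csSup_mul_csSup_le {s t : Set ℝ} (hs : s.Nonempty) (ht : t.Nonempty)
    (htb : BddAbove t) (hs0 : ∀ x ∈ s, 0 ≤ x) (ht0 : ∀ y ∈ t, 0 ≤ y)
    {T : ℝ} (hT : 0 ≤ T) (h : ∀ x ∈ s, ∀ y ∈ t, x * y ≤ T) :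
    sSup s * sSup t ≤ T := by
  obtain ⟨y0, hy0⟩ := ht
  have ht0' : 0 ≤ sSup t := (ht0 y0 hy0).trans (le_csSup htb hy0)
  have step1 : ∀ x ∈ s, x * sSup t ≤ T := by
    intro x hx
    rcases eq_or_lt_of_le (hs0 x hx) with h0 | hpos
    · rw [← h0, zero_mul]; exact hT
    · have hst : sSup t ≤ T / x := by
        refine csSup_le ⟨y0, hy0⟩ fun y hy => (le_div_iff₀ hpos).2 ?_
        rw [mul_comm]; exact h x hx y hy
      calc x * sSup t ≤ x * (T / x) := mul_le_mul_of_nonneg_left hst hpos.le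
        _ = T := by field_simp
  rcases eq_or_lt_of_le ht0' with h0 | hpos
  · rw [← h0, mul_zero]; exact hT
  · have hss : sSup s ≤ T / sSup t :=
      csSup_le hs fun x hx => (le_div_iff₀ hpos).2 (step1 x hx)
    calc sSup s * sSup t ≤ (T / sSup t) * sSup t := mul_le_mul_of_nonneg_right hss hpos.le
      _ = T := div_mul_cancel₀ _ hpos.ne'

section kron
variable {I J K L : Type*} [Fintype I] [Fintype J] [Fintype K] [Fintype L]

lemma kron_mulVec (A : Matrix I J ℝ) (B : Matrix K L ℝ) (u : J × L → ℝ) (i : I) (k : K) :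
    (Matrix.of fun (p : I × K) (q : J × L) => A p.1 q.1 * B p.2 q.2).mulVec u (i, k)
      = B.mulVec (fun l => A.mulVec (fun j => u (j, l)) i) k := by
  simp only [Matrix.mulVec, dotProduct, Matrix.of_apply, Fintype.sum_prod_type,
    Finset.mul_sum]
  rw [Finset.sum_comm]
  refine Finset.sum_congr rfl fun l _ => Finset.sum_congr rfl fun j _ => by ring

lemma specNorm_kron [Nonempty J] [Nonempty L]
    (A : Matrix I J ℝ) (B : Matrix K L ℝ) :
    specNorm (Matrix.of fun (p : I × K) (q : J × L) => A p.1 q.1 * B p.2 q.2)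
      = specNorm A * specNorm B := by
  set AB := Matrix.of fun (p : I × K) (q : J × L) => A p.1 q.1 * B p.2 q.2 with hAB
  have ha : 0 ≤ specNorm A := specNorm_nonneg A
  have hb : 0 ≤ specNorm B := specNorm_nonneg B
  apply le_antisymm
  · -- upper bound
    refine specNorm_le_of_forall AB fun u hu => ?_
    have hu2 : ∑ j, ∑ l, u (j, l) ^ 2 = 1 := by
      have := vnorm_sq u
      rw [hu, one_pow, Fintype.sum_prod_type] at this
      linarith
    have sqle : ∑ p : I × K, AB.mulVec u p ^ 2 ≤ (specNorm A * specNorm B) ^ 2 := by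
      calc ∑ p : I × K, AB.mulVec u p ^ 2
          = ∑ i, ∑ k, (B.mulVec (fun l => A.mulVec (fun j => u (j, l)) i) k) ^ 2 := by
            rw [Fintype.sum_prod_type]
            exact Finset.sum_congr rfl fun i _ => Finset.sum_congr rfl fun k _ => by
              rw [kron_mulVec]
        _ = ∑ i, vnorm (B.mulVec (fun l => A.mulVec (fun j => u (j, l)) i)) ^ 2 := by
            exact Finset.sum_congr rfl fun i _ => (vnorm_sq _).symm
        _ ≤ ∑ i, (specNorm B * vnorm (fun l => A.mulVec (fun j => u (j, l)) i)) ^ 2 := by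
            refine Finset.sum_le_sum fun i _ => ?_
            exact pow_le_pow_left₀ (vnorm_nonneg _) (vnorm_mulVec_le B _) 2
        _ = specNorm B ^ 2 * ∑ i, ∑ l, (A.mulVec (fun j => u (j, l)) i) ^ 2 := by
            rw [Finset.mul_sum]
            refine Finset.sum_congr rfl fun i _ => ?_
            rw [mul_pow, vnorm_sq]
        _ = specNorm B ^ 2 * ∑ l, vnorm (A.mulVec (fun j => u (j, l))) ^ 2 := by
            rw [Finset.sum_comm]
            congr 1
            exact Finset.sum_congr rfl fun l _ => (vnorm_sq _).symm
        _ ≤ specNorm B ^ 2 * ∑ l, (specNorm A * vnorm (fun j => u (j, l))) ^ 2 := by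
            refine mul_le_mul_of_nonneg_left ?_ (sq_nonneg _)
            refine Finset.sum_le_sum fun l _ => ?_
            exact pow_le_pow_left₀ (vnorm_nonneg _) (vnorm_mulVec_le A _) 2
        _ = (specNorm A * specNorm B) ^ 2 * ∑ l, ∑ j, u (j, l) ^ 2 := by
            rw [Finset.mul_sum, Finset.mul_sum]
            refine Finset.sum_congr rfl fun l _ => ?_
            rw [mul_pow, vnorm_sq]
            ring
        _ = (specNorm A * specNorm B) ^ 2 := by
            rw [Finset.sum_comm, hu2, mul_one]
    calc vnorm (AB.mulVec u) = Real.sqrt (∑ p, AB.mulVec u p ^ 2) := rfl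
      _ ≤ Real.sqrt ((specNorm A * specNorm B) ^ 2) := Real.sqrt_le_sqrt sqle
      _ = specNorm A * specNorm B := Real.sqrt_sq (mul_nonneg ha hb)
  · -- lower bound
    haveI : Nonempty (J × L) := ⟨(Classical.arbitrary J, Classical.arbitrary L)⟩
    have hT : 0 ≤ specNorm AB := specNorm_nonneg AB
    refine csSup_mul_csSup_le (specSet_nonempty A) (specSet_nonempty B) (specSet_bdd B)
      ?_ ?_ hT ?_
    · rintro x ⟨u, hu, rfl⟩; exact vnorm_nonneg _
    · rintro x ⟨u, hu, rfl⟩; exact vnorm_nonneg _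
    · rintro x ⟨u, hu, rfl⟩ y ⟨v, hv, rfl⟩
      have hw : vnorm (fun q : J × L => u q.1 * v q.2) = 1 := by
        rw [vnorm_prod, hu, hv, mul_one]
      have hmv : AB.mulVec (fun q : J × L => u q.1 * v q.2)
          = fun p : I × K => A.mulVec u p.1 * B.mulVec v p.2 := by
        funext p
        obtain ⟨i, k⟩ := p
        rw [kron_mulVec]
        simp only [Matrix.mulVec, dotProduct]
        rw [Finset.sum_mul_sum, Finset.sum_comm]
        refine Finset.sum_congr rfl fun l _ => ?_
        rw [Finset.mul_sum]
        exact Finset.sum_congr rfl fun j _ => by ring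
      have := le_specNorm AB _ hw
      rw [hmv] at this
      calc vnorm (A.mulVec u) * vnorm (B.mulVec v)
          = vnorm (fun p : I × K => A.mulVec u p.1 * B.mulVec v p.2) := (vnorm_prod _ _).symm
        _ ≤ specNorm AB := this

end kron

lemma key_div {T m m' p r : ℕ} (hm : m ≤ T) (hm' : m' ≤ T)
    (hp : p < 2 ^ m') (hr : r < 2 ^ (T - m')) :
    (p * 2 ^ (T - m') + r) / 2 ^ (T - m)
      = (p / 2 ^ (m' - m)) * 2 ^ (m - min m m') + r / 2 ^ ((T - m) - (m' - m)) := by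
  rcases le_total m m' with h | h
  · have e0 : m - min m m' = 0 := by omega
    have eb : (T - m) - (m' - m) = T - m' := by omega
    have epow : (2:ℕ) ^ (T - m) = 2 ^ (T - m') * 2 ^ (m' - m) := by
      rw [← pow_add]; congr 1; omega
    rw [e0, eb, pow_zero, mul_one, Nat.div_eq_of_lt hr, add_zero, epow,
      ← Nat.div_div_eq_div_mul, add_comm,
      Nat.add_mul_div_right _ _ (pow_pos (by norm_num) _), Nat.div_eq_of_lt hr, zero_add]
  · have e0 : m' - m = 0 := by omega
    have emin : m - min m m' = m - m' := by omega
    have eb : (T - m) - (m' - m) = T - m := by omega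
    have epow : (2:ℕ) ^ (T - m') = 2 ^ (m - m') * 2 ^ (T - m) := by
      rw [← pow_add]; congr 1; omega
    rw [eb, emin, e0, pow_zero, Nat.div_one, epow, ← mul_assoc, add_comm,
      Nat.add_mul_div_right _ _ (pow_pos (by norm_num) _), add_comm]

lemma key_mod {T m m' p r : ℕ} (hm : m ≤ T) (hm' : m' ≤ T)
    (hp : p < 2 ^ m') (hr : r < 2 ^ (T - m')) :
    (p * 2 ^ (T - m') + r) % 2 ^ (T - m)
      = (p % 2 ^ (m' - m)) * 2 ^ ((T - m) - (m' - m)) + r % 2 ^ ((T - m) - (m' - m)) := by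
  rcases le_total m m' with h | h
  · have eb : (T - m) - (m' - m) = T - m' := by omega
    have epow : (2:ℕ) ^ (T - m) = 2 ^ (m' - m) * 2 ^ (T - m') := by
      rw [← pow_add]; congr 1; omega
    have hQ : 0 < (2:ℕ) ^ (m' - m) := pow_pos (by norm_num) _
    have decomp : p * 2 ^ (T - m') + r
        = 2 ^ (T - m) * (p / 2 ^ (m' - m))
          + ((p % 2 ^ (m' - m)) * 2 ^ (T - m') + r) := by
      calc p * 2 ^ (T - m') + r
          = (2 ^ (m' - m) * (p / 2 ^ (m' - m)) + p % 2 ^ (m' - m)) * 2 ^ (T - m') + r := by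
            rw [Nat.div_add_mod]
        _ = (2 ^ (m' - m) * 2 ^ (T - m')) * (p / 2 ^ (m' - m))
              + ((p % 2 ^ (m' - m)) * 2 ^ (T - m') + r) := by ring
        _ = _ := by rw [← epow]
    have hbound : (p % 2 ^ (m' - m)) * 2 ^ (T - m') + r < 2 ^ (T - m) := by
      have h1 : p % 2 ^ (m' - m) < 2 ^ (m' - m) := Nat.mod_lt _ hQ
      calc (p % 2 ^ (m' - m)) * 2 ^ (T - m') + r
          < (p % 2 ^ (m' - m)) * 2 ^ (T - m') + 2 ^ (T - m') := by omega
        _ = (p % 2 ^ (m' - m) + 1) * 2 ^ (T - m') := by ring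
        _ ≤ 2 ^ (m' - m) * 2 ^ (T - m') := Nat.mul_le_mul_right _ (by omega)
        _ = 2 ^ (T - m) := epow.symm
    rw [eb, Nat.mod_eq_of_lt hr, decomp, Nat.mul_add_mod, Nat.mod_eq_of_lt hbound]
  · have e0 : m' - m = 0 := by omega
    have eb : (T - m) - (m' - m) = T - m := by omega
    have epow : (2:ℕ) ^ (T - m') = 2 ^ (m - m') * 2 ^ (T - m) := by
      rw [← pow_add]; congr 1; omega
    rw [eb, e0, pow_zero, Nat.mod_one, zero_mul, zero_add, epow, ← mul_assoc, add_comm,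
      Nat.add_mul_mod_self_right]

/-- Split `Fin (2^c)` as `Fin (2^a) × Fin (2^b)` when `c = a + b`. -/
def esplit {c a b : ℕ} (h : c = a + b) : Fin (2 ^ c) ≃ Fin (2 ^ a) × Fin (2 ^ b) where
  toFun i :=
    (⟨(i : ℕ) / 2 ^ b, by
      have h2 : (2:ℕ) ^ c = 2 ^ a * 2 ^ b := by rw [h, pow_add]
      exact (Nat.div_lt_iff_lt_mul (pow_pos (by norm_num) _)).2 (i.2.trans_eq h2)⟩,
     ⟨(i : ℕ) % 2 ^ b, Nat.mod_lt _ (pow_pos (by norm_num) _)⟩)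
  invFun p :=
    ⟨(p.1 : ℕ) * 2 ^ b + (p.2 : ℕ), by
      have h2 : (2:ℕ) ^ c = 2 ^ a * 2 ^ b := by rw [h, pow_add]
      calc (p.1 : ℕ) * 2 ^ b + (p.2 : ℕ)
          < (p.1 : ℕ) * 2 ^ b + 2 ^ b := by omega
        _ = ((p.1 : ℕ) + 1) * 2 ^ b := by ring
        _ ≤ 2 ^ a * 2 ^ b := Nat.mul_le_mul_right _ p.1.2
        _ = 2 ^ c := h2.symm⟩
  left_inv i := by
    ext
    simp only
    rw [mul_comm, Nat.div_add_mod]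
  right_inv p := by
    ext
    · simp only
      rw [add_comm, Nat.add_mul_div_right _ _ (pow_pos (by norm_num) _),
        Nat.div_eq_of_lt p.2.2, zero_add]
    · simp only
      rw [add_comm, Nat.add_mul_mod_self_right, Nat.mod_eq_of_lt p.2.2]


/-- factorization of the spectral norm of the rearranged Kronecker
product: `‖R_{m',n'}[A ⊗ B]‖_S = ‖R_{m∧m',n∧n'}[A]‖_S · ‖R_{(m'−m)₊,(n'−n)₊}[B]‖_S`. -/
theorem specNorm_rearr_kron {M N m n m' n' : ℕ}
    (hm : m ≤ M) (hn : n ≤ N) (hm' : m' ≤ M) (hn' : n' ≤ N)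
    (A : Matrix (Fin (2 ^ m)) (Fin (2 ^ n)) ℝ)
    (B : Matrix (Fin (2 ^ (M - m))) (Fin (2 ^ (N - n))) ℝ) :
    specNorm (rearr hm' hn' (pkron hm hn A B)) =
      specNorm (rearr (a := min m m') (b := min n n')
          (min_le_left m m') (min_le_left n n') A) *
      specNorm (rearr (a := m' - m) (b := n' - n)
          (Nat.sub_le_sub_right hm' m) (Nat.sub_le_sub_right hn' n) B) := by
  classical
  set RA := rearr (a := min m m') (b := min n n') (min_le_left m m') (min_le_left n n') A
    with hRA
  set RB := rearr (a := m' - m) (b := n' - n)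
      (Nat.sub_le_sub_right hm' m) (Nat.sub_le_sub_right hn' n) B with hRB
  have hrow : m' = min m m' + (m' - m) := by omega
  have hcol : n' = min n n' + (n' - n) := by omega
  have hrowc : M - m' = (m - min m m') + ((M - m) - (m' - m)) := by omega
  have hcolc : N - n' = (n - min n n') + ((N - n) - (n' - n)) := by omega
  let e : Fin (2 ^ m') × Fin (2 ^ n') ≃
      (Fin (2 ^ min m m') × Fin (2 ^ min n n')) × (Fin (2 ^ (m' - m)) × Fin (2 ^ (n' - n))) :=
    ((esplit hrow).prodCongr (esplit hcol)).trans (Equiv.prodProdProdComm _ _ _ _)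
  let f : Fin (2 ^ (M - m')) × Fin (2 ^ (N - n')) ≃
      (Fin (2 ^ (m - min m m')) × Fin (2 ^ (n - min n n'))) ×
        (Fin (2 ^ ((M - m) - (m' - m))) × Fin (2 ^ ((N - n) - (n' - n)))) :=
    ((esplit hrowc).prodCongr (esplit hcolc)).trans (Equiv.prodProdProdComm _ _ _ _)
  let K : Matrix
      ((Fin (2 ^ min m m') × Fin (2 ^ min n n')) × (Fin (2 ^ (m' - m)) × Fin (2 ^ (n' - n))))
      ((Fin (2 ^ (m - min m m')) × Fin (2 ^ (n - min n n'))) ×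
        (Fin (2 ^ ((M - m) - (m' - m))) × Fin (2 ^ ((N - n) - (n' - n))))) ℝ :=
    Matrix.of fun x y => RA x.1 y.1 * RB x.2 y.2
  have hmat : rearr hm' hn' (pkron hm hn A B) = Matrix.of fun i j => K (e i) (f j) := by
    funext x y
    obtain ⟨p, q⟩ := x
    obtain ⟨r, s⟩ := y
    show pkron hm hn A B (pcomb hm' p r) (pcomb hn' q s) = _
    show A (pdiv hm (pcomb hm' p r)) (pdiv hn (pcomb hn' q s)) *
        B (pmod (pcomb hm' p r)) (pmod (pcomb hn' q s)) = _
    have hArow : pdiv hm (pcomb hm' p r)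
        = pcomb (min_le_left m m') ((esplit hrow) p).1 ((esplit hrowc) r).1 :=
      Fin.ext (key_div hm hm' p.2 r.2)
    have hAcol : pdiv hn (pcomb hn' q s)
        = pcomb (min_le_left n n') ((esplit hcol) q).1 ((esplit hcolc) s).1 :=
      Fin.ext (key_div hn hn' q.2 s.2)
    have hBrow : pmod (pcomb hm' p r)
        = pcomb (Nat.sub_le_sub_right hm' m) ((esplit hrow) p).2 ((esplit hrowc) r).2 :=
      Fin.ext (key_mod hm hm' p.2 r.2)
    have hBcol : pmod (pcomb hn' q s)
        = pcomb (Nat.sub_le_sub_right hn' n) ((esplit hcol) q).2 ((esplit hcolc) s).2 :=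
      Fin.ext (key_mod hn hn' q.2 s.2)
    rw [hArow, hAcol, hBrow, hBcol]
    rfl
  haveI h1 : Nonempty (Fin (2 ^ (m - min m m'))) := ⟨⟨0, pow_pos (by norm_num) _⟩⟩
  haveI h2 : Nonempty (Fin (2 ^ (n - min n n'))) := ⟨⟨0, pow_pos (by norm_num) _⟩⟩
  haveI h3 : Nonempty (Fin (2 ^ ((M - m) - (m' - m)))) := ⟨⟨0, pow_pos (by norm_num) _⟩⟩
  haveI h4 : Nonempty (Fin (2 ^ ((N - n) - (n' - n)))) := ⟨⟨0, pow_pos (by norm_num) _⟩⟩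
  calc specNorm (rearr hm' hn' (pkron hm hn A B))
      = specNorm (Matrix.of fun i j => K (e i) (f j)) := by rw [hmat]
    _ = specNorm K := specNorm_reindex K e f
    _ = specNorm RA * specNorm RB := specNorm_kron RA RB
end

section
/- Let U, V be subspaces of ℝⁿ with smallest principal angle Θ(U,V) = θ ∈ [0, π/2], and let w ∈ ℝⁿ be a unit vector with ‖P_U w‖ = cos α for some α ∈ [0, π/2], where P_U is the orthogonal projection onto U. If α ≤ θ, then ‖P_V w‖ ≤ cos(θ − α). -/
open Real Set

private lemma trig_bound (θ α t s : ℝ) (hθ : θ ∈ Set.Icc 0 (π / 2))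
    (hα : α ∈ Set.Icc 0 (π / 2)) (hle : α ≤ θ) (ht : 0 ≤ t) (hs : 0 ≤ s)
    (hts : t ^ 2 + s ^ 2 = 1) (htθ : t ≤ Real.cos θ) :
    Real.cos α * t + Real.sin α * s ≤ Real.cos (θ - α) := by
  obtain ⟨hθ0, hθ2⟩ := hθ
  obtain ⟨hα0, hα2⟩ := hα
  set β := Real.arccos t with hβ
  have ht1 : t ≤ 1 := by nlinarith
  have hcosβ : Real.cos β = t := Real.cos_arccos (by linarith) ht1
  have hsinβ : Real.sin β = s := by
    rw [hβ, Real.sin_arccos, show 1 - t ^ 2 = s ^ 2 by linarith, Real.sqrt_sq hs]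
  have hθβ : θ ≤ β := by
    have h1 : Real.arcsin t ≤ Real.arcsin (Real.cos θ) := Real.monotone_arcsin htθ
    have h2 : Real.arcsin (Real.cos θ) = π / 2 - θ := by
      rw [← Real.sin_pi_div_two_sub, Real.arcsin_sin (by linarith) (by linarith)]
    rw [hβ, Real.arccos_eq_pi_div_two_sub_arcsin]
    linarith
  have hβπ : β ≤ π := Real.arccos_le_pi t
  have hmono : Real.cos (β - α) ≤ Real.cos (θ - α) :=
    Real.cos_le_cos_of_nonneg_of_le_pi (by linarith) (by linarith) (by linarith)
  have : Real.cos (β - α) = Real.cos α * t + Real.sin α * s := by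
    rw [Real.cos_sub, hcosβ, hsinβ]; ring
  linarith

set_option maxHeartbeats 1000000 in
/-- if `U, V ⊆ ℝⁿ` have smallest principal angle `θ ∈ [0, π/2]`,
`w` is a unit vector with `‖P_U w‖ = cos α`, `α ∈ [0, π/2]`, and `α ≤ θ`,
then `‖P_V w‖ ≤ cos (θ − α)`. -/
theorem projection_principal_angle_bound {n : ℕ}
    (U V : Submodule ℝ (EuclideanSpace ℝ (Fin n)))
    (θ α : ℝ) (hθ : θ ∈ Set.Icc 0 (π / 2)) (hα : α ∈ Set.Icc 0 (π / 2))
    (hcos : Real.cos θ =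
      sSup {x : ℝ | ∃ u ∈ U, ∃ v ∈ V, ‖u‖ = 1 ∧ ‖v‖ = 1 ∧ x = (inner ℝ u v : ℝ)})
    (w : EuclideanSpace ℝ (Fin n)) (hw : ‖w‖ = 1)
    (hproj : ‖(U.orthogonalProjectionOnto w : EuclideanSpace ℝ (Fin n))‖ = Real.cos α)
    (hle : α ≤ θ) :
    ‖(V.orthogonalProjectionOnto w : EuclideanSpace ℝ (Fin n))‖ ≤ Real.cos (θ - α) := by
  obtain ⟨hθ0, hθ2⟩ := hθ
  obtain ⟨hα0, hα2⟩ := hα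
  have hcosθα : 0 ≤ Real.cos (θ - α) :=
    Real.cos_nonneg_of_mem_Icc ⟨by linarith, by linarith⟩
  -- bound on elements of the set
  have hbdd : BddAbove {x : ℝ | ∃ u ∈ U, ∃ v ∈ V, ‖u‖ = 1 ∧ ‖v‖ = 1 ∧
      x = (inner ℝ u v : ℝ)} := by
    refine ⟨1, fun x hx => ?_⟩
    obtain ⟨u, _, v, _, hu1, hv1, rfl⟩ := hx
    calc (inner ℝ u v : ℝ) ≤ ‖u‖ * ‖v‖ := real_inner_le_norm u v
      _ = 1 := by rw [hu1, hv1]; ring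
  have hUV : ∀ u ∈ U, ∀ v ∈ V, ‖u‖ = 1 → ‖v‖ = 1 → (inner ℝ u v : ℝ) ≤ Real.cos θ := by
    intro u hu v hv hu1 hv1
    rw [hcos]
    exact le_csSup hbdd ⟨u, hu, v, hv, hu1, hv1, rfl⟩
  -- inner ℝ product with projection equals norm squared
  have hinner_sq : ∀ (K : Submodule ℝ (EuclideanSpace ℝ (Fin n)))
      (x : EuclideanSpace ℝ (Fin n)),
      (inner ℝ x (K.orthogonalProjectionOnto x : EuclideanSpace ℝ (Fin n)) : ℝ) =
        ‖(K.orthogonalProjectionOnto x : EuclideanSpace ℝ (Fin n))‖ ^ 2 := by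
    intro K x
    have h0 : (inner ℝ (x - (K.orthogonalProjectionOnto x : EuclideanSpace ℝ (Fin n)))
        ((K.orthogonalProjectionOnto x : EuclideanSpace ℝ (Fin n))) : ℝ) = 0 :=
      Submodule.starProjection_inner_eq_zero x _ (Submodule.coe_mem _)
    rw [inner_sub_left] at h0
    have := real_inner_self_eq_norm_sq
      ((K.orthogonalProjectionOnto x : EuclideanSpace ℝ (Fin n)))
    linarith
  -- key bound: projection of a unit vector of V onto U has norm ≤ cos θ
  have hprojV : ∀ v ∈ V, ‖v‖ = 1 →
      ‖(U.orthogonalProjectionOnto v : EuclideanSpace ℝ (Fin n))‖ ≤ Real.cos θ := by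
    intro v hv hv1
    set m := (U.orthogonalProjectionOnto v : EuclideanSpace ℝ (Fin n)) with hm
    by_cases hm0 : m = 0
    · rw [hm0, norm_zero]
      exact Real.cos_nonneg_of_mem_Icc ⟨by linarith, hθ2⟩
    · have htpos : 0 < ‖m‖ := norm_pos_iff.mpr hm0
      set u := ‖m‖⁻¹ • m with hu
      have huU : u ∈ U := U.smul_mem _ (Submodule.coe_mem _)
      have hu1 : ‖u‖ = 1 := by
        rw [hu, norm_smul, norm_inv, norm_norm, inv_mul_cancel₀ htpos.ne']
      have hiv : (inner ℝ u v : ℝ) = ‖m‖ := by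
        rw [hu, real_inner_smul_left, real_inner_comm, hinner_sq U v]
        field_simp
        ring
      have := hUV u huU v hv hu1 hv1
      linarith [hiv ▸ this]
  -- orthogonal decomposition of w
  set p := (U.orthogonalProjectionOnto w : EuclideanSpace ℝ (Fin n)) with hp
  set q := w - p with hq
  have hwpq : w = p + q := by rw [hq]; abel
  have hpq : (inner ℝ p q : ℝ) = 0 := by
    rw [real_inner_comm, hq]
    exact Submodule.starProjection_inner_eq_zero w p (Submodule.coe_mem _)
  have hnormsum : ‖p‖ ^ 2 + ‖q‖ ^ 2 = 1 := by
    have := norm_add_sq_real p q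
    rw [← hwpq, hw, hpq] at this
    nlinarith
  have hsinα : ‖q‖ = Real.sin α := by
    have hsin0 : 0 ≤ Real.sin α := Real.sin_nonneg_of_nonneg_of_le_pi hα0 (by linarith)
    have hsq : ‖q‖ ^ 2 = Real.sin α ^ 2 := by
      have h1 := Real.sin_sq_add_cos_sq α
      have h2 : ‖p‖ ^ 2 = Real.cos α ^ 2 := by rw [hproj]
      linarith
    nlinarith [norm_nonneg q]
  -- main claim: for all unit v ∈ V, ⟨w, v⟩ ≤ cos (θ - α)
  have hclaim : ∀ v ∈ V, ‖v‖ = 1 → (inner ℝ w v : ℝ) ≤ Real.cos (θ - α) := by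
    intro v hv hv1
    set m := (U.orthogonalProjectionOnto v : EuclideanSpace ℝ (Fin n)) with hm
    set t := ‖m‖ with ht
    set s := ‖v - m‖ with hs
    have htθ : t ≤ Real.cos θ := hprojV v hv hv1
    have hvm : (inner ℝ (v - m) m : ℝ) = 0 :=
      Submodule.starProjection_inner_eq_zero v m (Submodule.coe_mem _)
    have hts : t ^ 2 + s ^ 2 = 1 := by
      have h1 := norm_add_sq_real m (v - m)
      have h2 : m + (v - m) = v := by abel
      rw [h2, hv1, real_inner_comm, hvm] at h1
      nlinarith
    -- ⟨p, v⟩ ≤ cos α * t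
    have hpv : (inner ℝ p v : ℝ) ≤ Real.cos α * t := by
      have h1 : (inner ℝ p (v - m) : ℝ) = 0 := by
        rw [real_inner_comm]
        exact Submodule.starProjection_inner_eq_zero v p (Submodule.coe_mem _)
      have h2 : (inner ℝ p v : ℝ) = inner ℝ p m := by
        rw [inner_sub_right] at h1; linarith
      calc (inner ℝ p v : ℝ) = inner ℝ p m := h2
        _ ≤ ‖p‖ * ‖m‖ := real_inner_le_norm p m
        _ = Real.cos α * t := by rw [hproj]
    -- ⟨q, v⟩ ≤ sin α * s
    have hqv : (inner ℝ q v : ℝ) ≤ Real.sin α * s := by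
      have h1 : (inner ℝ q m : ℝ) = 0 := by
        rw [hq]
        exact Submodule.starProjection_inner_eq_zero w m (Submodule.coe_mem _)
      have h2 : (inner ℝ q v : ℝ) = inner ℝ q (v - m) := by
        rw [inner_sub_right]; linarith
      calc (inner ℝ q v : ℝ) = inner ℝ q (v - m) := h2
        _ ≤ ‖q‖ * ‖v - m‖ := real_inner_le_norm q (v - m)
        _ = Real.sin α * s := by rw [hsinα]
    have hsum : (inner ℝ w v : ℝ) = inner ℝ p v + inner ℝ q v := by
      rw [hwpq, inner_add_left]
    have := trig_bound θ α t s ⟨hθ0, hθ2⟩ ⟨hα0, hα2⟩ hle (norm_nonneg m)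
      (norm_nonneg (v - m)) hts htθ
    linarith
  -- conclude
  set r := ‖(V.orthogonalProjectionOnto w : EuclideanSpace ℝ (Fin n))‖ with hr
  by_cases hr0 : (V.orthogonalProjectionOnto w : EuclideanSpace ℝ (Fin n)) = 0
  · rw [hr, hr0, norm_zero]; exact hcosθα
  · have hrpos : 0 < r := norm_pos_iff.mpr hr0
    set v := r⁻¹ • (V.orthogonalProjectionOnto w : EuclideanSpace ℝ (Fin n)) with hv
    have hvV : v ∈ V := V.smul_mem _ (Submodule.coe_mem _)
    have hv1 : ‖v‖ = 1 := by
      rw [hv, norm_smul, norm_inv, Real.norm_eq_abs, abs_of_pos hrpos,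
        inv_mul_cancel₀ hrpos.ne']
    have hwv : (inner ℝ w v : ℝ) = r := by
      rw [hv, real_inner_smul_right, hinner_sq V w]
      field_simp
      ring
    have := hclaim v hvV hv1
    linarith [hwv ▸ this]
end

section
/- Let M₁, M₂ be real matrices of the same dimensions with ‖M₁‖_S = μ, ‖M₂‖_S = ν. Let θ be the smallest principal angle between the column spaces of M₁ and M₂, and η the smallest principal angle between their row spaces. Then ‖M₁ + M₂‖_S² ≤ (1/2)[ μ² + ν² + 2μν cos θ cos η + sqrt( (μ² + ν² + 2μν cos θ cos η)² − 4μ²ν² sin²θ sin²η ) ]. -/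
open Matrix Real Set
open scoped RealInnerProductSpace

/-- The set of cosines of angles between vectors of the column spaces of two matrices;
its supremum is the cosine of the smallest principal angle. -/
noncomputable def angleSet {P Q R : ℕ} (M1 : Matrix (Fin P) (Fin Q) ℝ)
    (M2 : Matrix (Fin P) (Fin R) ℝ) : Set ℝ :=
  {x | ∃ (u : Fin Q → ℝ) (v : Fin R → ℝ), M1.mulVec u ≠ 0 ∧ M2.mulVec v ≠ 0 ∧
    x = (∑ i, M1.mulVec u i * M2.mulVec v i) / (vnorm (M1.mulVec u) * vnorm (M2.mulVec v))}

abbrev Evec (n : ℕ) := EuclideanSpace ℝ (Fin n)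

def toE {n : ℕ} (v : Fin n → ℝ) : Evec n := WithLp.toLp 2 v

lemma vnorm_eq_norm {n : ℕ} (v : Fin n → ℝ) : vnorm v = ‖toE v‖ := by
  rw [EuclideanSpace.norm_eq, vnorm]
  congr 1; apply Finset.sum_congr rfl; intro i _
  rw [Real.norm_eq_abs, sq_abs]; rfl

lemma inner_toE {n : ℕ} (x y : Fin n → ℝ) : ⟪toE x, toE y⟫ = ∑ i, x i * y i := by
  rw [PiLp.inner_apply]; simp [RCLike.inner_apply]; exact Finset.sum_congr rfl (fun i _ => mul_comm _ _)

noncomputable def mulVecE {m n : ℕ} (M : Matrix (Fin m) (Fin n) ℝ) (v : Fin n → ℝ) : Evec m :=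
  toE (M.mulVec v)

lemma mulVecE_eq_toE {m n : ℕ} (M : Matrix (Fin m) (Fin n) ℝ) (v : Fin n → ℝ) :
    mulVecE M v = toE (M.mulVec v) := rfl

lemma inner_mulVecE {m n : ℕ} (M : Matrix (Fin m) (Fin n) ℝ) (u : Fin n → ℝ) (w : Fin m → ℝ) :
    ⟪mulVecE M u, toE w⟫ = ⟪toE u, mulVecE Mᵀ w⟫ := by
  rw [mulVecE_eq_toE, mulVecE_eq_toE, inner_toE, inner_toE]
  show (M.mulVec u) ⬝ᵥ w = u ⬝ᵥ (Mᵀ.mulVec w)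
  rw [mulVec_transpose, dotProduct_comm, dotProduct_mulVec, dotProduct_comm]

noncomputable def mulVecL {m n : ℕ} (M : Matrix (Fin m) (Fin n) ℝ) : Evec n →ₗ[ℝ] Evec m where
  toFun v := mulVecE M v
  map_add' x y := by show toE (Matrix.mulVec M (x + y).ofLp) = _; rw [WithLp.ofLp_add, mulVec_add]; rfl
  map_smul' c x := by show toE (Matrix.mulVec M (c • x).ofLp) = _; rw [WithLp.ofLp_smul, mulVec_smul]; rfl

noncomputable def mulVecCLM {m n : ℕ} (M : Matrix (Fin m) (Fin n) ℝ) : Evec n →L[ℝ] Evec m :=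
  LinearMap.toContinuousLinearMap (mulVecL M)

lemma mulVecCLM_apply {m n : ℕ} (M : Matrix (Fin m) (Fin n) ℝ) (v : Fin n → ℝ) :
    mulVecCLM M (toE v) = mulVecE M v := rfl

lemma specNorm_eq_opNorm {m n : ℕ} (M : Matrix (Fin m) (Fin n) ℝ) :
    specNorm M = ‖mulVecCLM M‖ := by
  have key : ∀ u : Fin n → ℝ, vnorm u = 1 → vnorm (M.mulVec u) ≤ ‖mulVecCLM M‖ := by
    intro u hu
    rw [vnorm_eq_norm] at hu ⊢
    show ‖mulVecCLM M (toE u)‖ ≤ _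
    calc ‖mulVecCLM M (toE u)‖ ≤ ‖mulVecCLM M‖ * ‖toE u‖ :=
          (mulVecCLM M).le_opNorm (toE u)
      _ = ‖mulVecCLM M‖ := by rw [hu, mul_one]
  apply le_antisymm
  · apply Real.sSup_le
    · rintro x ⟨u, hu, rfl⟩; exact key u hu
    · exact norm_nonneg _
  · apply ContinuousLinearMap.opNorm_le_bound
    · apply Real.sSup_nonneg
      rintro x ⟨u, hu, rfl⟩
      rw [vnorm_eq_norm]; exact norm_nonneg _
    · intro v
      rcases eq_or_ne v 0 with rfl | hv
      · simp
      · have hvn : ‖v‖ ≠ 0 := norm_ne_zero_iff.mpr hv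
        set u : Evec n := ‖v‖⁻¹ • v with hudef
        have h1 : ‖u‖ = 1 := by
          rw [hudef, norm_smul, norm_inv, norm_norm, inv_mul_cancel₀ hvn]
        have hmem : vnorm (M.mulVec u) ∈
            {x | ∃ u : Fin n → ℝ, vnorm u = 1 ∧ x = vnorm (M.mulVec u)} :=
          ⟨u, by rw [vnorm_eq_norm]; exact h1, rfl⟩
        have hbdd : BddAbove {x | ∃ u : Fin n → ℝ, vnorm u = 1 ∧ x = vnorm (M.mulVec u)} := by
          refine ⟨‖mulVecCLM M‖, ?_⟩
          rintro x ⟨u, hu, rfl⟩; exact key u hu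
        have hle := le_csSup hbdd hmem
        have heq : vnorm (M.mulVec u) = ‖v‖⁻¹ * ‖mulVecCLM M v‖ := by
          rw [vnorm_eq_norm]
          show ‖mulVecCLM M u‖ = _
          rw [hudef, (mulVecCLM M).map_smul, norm_smul, norm_inv, norm_norm]
        rw [heq] at hle
        rw [show ‖mulVecCLM M v‖ = ‖v‖ * (‖v‖⁻¹ * ‖mulVecCLM M v‖) by field_simp]
        rw [mul_comm (specNorm M) ‖v‖]
        exact mul_le_mul_of_nonneg_left hle (norm_nonneg _)

lemma specNorm_nonneg_s8 {m n : ℕ} (M : Matrix (Fin m) (Fin n) ℝ) : 0 ≤ specNorm M := by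
  rw [specNorm_eq_opNorm]; exact norm_nonneg _

lemma norm_mulVecE_le {m n : ℕ} (M : Matrix (Fin m) (Fin n) ℝ) (v : Evec n) :
    ‖mulVecE M v‖ ≤ specNorm M * ‖v‖ := by
  rw [specNorm_eq_opNorm]
  exact (mulVecCLM M).le_opNorm v

lemma norm_mulVecE_transpose_le {m n : ℕ} (M : Matrix (Fin m) (Fin n) ℝ) (z : Evec m) :
    ‖mulVecE Mᵀ z‖ ≤ specNorm M * ‖z‖ := by
  rcases eq_or_ne (‖mulVecE Mᵀ z‖) 0 with h0 | h0
  · rw [h0]; exact mul_nonneg (specNorm_nonneg_s8 M) (norm_nonneg _)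
  · have hpos : 0 < ‖mulVecE Mᵀ z‖ := lt_of_le_of_ne (norm_nonneg _) (Ne.symm h0)
    have key : ‖mulVecE Mᵀ z‖ ^ 2 ≤ specNorm M * ‖z‖ * ‖mulVecE Mᵀ z‖ := by
      have h1 : ‖mulVecE Mᵀ z‖ ^ 2 = ⟪mulVecE Mᵀ z, mulVecE Mᵀ z⟫ := by
        rw [real_inner_self_eq_norm_sq]
      have h2 : ⟪mulVecE Mᵀ z, mulVecE Mᵀ z⟫ = ⟪mulVecE M (Mᵀ.mulVec z), toE z⟫ :=
        (inner_mulVecE M (Mᵀ.mulVec z) z).symm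
      rw [h1, h2]
      calc ⟪mulVecE M (Mᵀ.mulVec z), toE z⟫ ≤ ‖mulVecE M (Mᵀ.mulVec z)‖ * ‖toE z‖ :=
            real_inner_le_norm _ _
        _ ≤ (specNorm M * ‖mulVecE Mᵀ z‖) * ‖toE z‖ := by
            apply mul_le_mul_of_nonneg_right _ (norm_nonneg _)
            exact norm_mulVecE_le M (mulVecE Mᵀ z)
        _ = specNorm M * ‖z‖ * ‖mulVecE Mᵀ z‖ := by
            show specNorm M * ‖mulVecE Mᵀ z‖ * ‖z‖ = _; ring
    nlinarith [key, hpos]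

lemma specNorm_transpose {m n : ℕ} (M : Matrix (Fin m) (Fin n) ℝ) :
    specNorm Mᵀ = specNorm M := by
  have key : ∀ (p q : ℕ) (N : Matrix (Fin p) (Fin q) ℝ), specNorm Nᵀ ≤ specNorm N := by
    intro p q N
    apply Real.sSup_le _ (specNorm_nonneg_s8 N)
    rintro x ⟨u, hu, rfl⟩
    rw [vnorm_eq_norm] at hu ⊢
    calc ‖toE (Nᵀ.mulVec u)‖ = ‖mulVecE Nᵀ (toE u)‖ := rfl
      _ ≤ specNorm N * ‖toE u‖ := norm_mulVecE_transpose_le N (toE u)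
      _ = specNorm N := by rw [hu, mul_one]
  refine le_antisymm (key _ _ M) ?_
  have := key _ _ Mᵀ
  rwa [transpose_transpose] at this

lemma angleSet_bddAbove {p q r : ℕ} (A : Matrix (Fin p) (Fin q) ℝ)
    (B : Matrix (Fin p) (Fin r) ℝ) : BddAbove (angleSet A B) := by
  refine ⟨1, ?_⟩
  rintro x ⟨u, v, hu, hv, rfl⟩
  have hnu : 0 < vnorm (A.mulVec u) := by
    rw [vnorm_eq_norm]
    exact norm_pos_iff.mpr (fun h => hu (by simpa [toE] using congrArg WithLp.ofLp h))
  have hnv : 0 < vnorm (B.mulVec v) := by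
    rw [vnorm_eq_norm]
    exact norm_pos_iff.mpr (fun h => hv (by simpa [toE] using congrArg WithLp.ofLp h))
  rw [div_le_one (by positivity)]
  calc (∑ i, A.mulVec u i * B.mulVec v i) = ⟪mulVecE A u, mulVecE B v⟫ := by
        rw [mulVecE_eq_toE, mulVecE_eq_toE, inner_toE]
    _ ≤ ‖mulVecE A u‖ * ‖mulVecE B v‖ := real_inner_le_norm _ _
    _ = vnorm (A.mulVec u) * vnorm (B.mulVec v) := by
        rw [vnorm_eq_norm, vnorm_eq_norm]; rfl

lemma inner_le_csSup_angleSet {p q r : ℕ} (A : Matrix (Fin p) (Fin q) ℝ)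
    (B : Matrix (Fin p) (Fin r) ℝ) (c : ℝ) (hc : 0 ≤ c) (hcs : sSup (angleSet A B) ≤ c)
    (u : Fin q → ℝ) (v : Fin r → ℝ) :
    ⟪mulVecE A u, mulVecE B v⟫ ≤ c * (‖mulVecE A u‖ * ‖mulVecE B v‖) := by
  rcases eq_or_ne (A.mulVec u) 0 with h0 | h0
  · have : mulVecE A u = 0 := by rw [mulVecE, h0]; rfl
    rw [this, inner_zero_left, norm_zero, zero_mul, mul_zero]
  rcases eq_or_ne (B.mulVec v) 0 with h0' | h0'
  · have : mulVecE B v = 0 := by rw [mulVecE, h0']; rfl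
    rw [this, inner_zero_right, norm_zero, mul_zero, mul_zero]
  have hmem : (∑ i, A.mulVec u i * B.mulVec v i) /
      (vnorm (A.mulVec u) * vnorm (B.mulVec v)) ∈ angleSet A B := ⟨u, v, h0, h0', rfl⟩
  have hle := le_csSup (angleSet_bddAbove A B) hmem
  have hnu : 0 < ‖mulVecE A u‖ := norm_pos_iff.mpr (fun h => h0 (by simpa [mulVecE, toE] using congrArg WithLp.ofLp h))
  have hnv : 0 < ‖mulVecE B v‖ := norm_pos_iff.mpr (fun h => h0' (by simpa [mulVecE, toE] using congrArg WithLp.ofLp h))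
  have hsum : (∑ i, A.mulVec u i * B.mulVec v i) = ⟪mulVecE A u, mulVecE B v⟫ := by
    rw [mulVecE_eq_toE, mulVecE_eq_toE, inner_toE]
  have hvn : vnorm (A.mulVec u) * vnorm (B.mulVec v) = ‖mulVecE A u‖ * ‖mulVecE B v‖ := by
    rw [vnorm_eq_norm, vnorm_eq_norm]; rfl
  rw [hsum, hvn] at hmem hle
  have := hle.trans hcs
  rw [div_le_iff₀ (by positivity)] at this
  linarith [this]

noncomputable def colSpace {m n : ℕ} (M : Matrix (Fin m) (Fin n) ℝ) : Submodule ℝ (Evec m) :=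
  LinearMap.range (mulVecL M)

lemma mulVecE_mem_colSpace {m n : ℕ} (M : Matrix (Fin m) (Fin n) ℝ) (v : Fin n → ℝ) :
    mulVecE M v ∈ colSpace M := ⟨toE v, rfl⟩

noncomputable def projC {m n : ℕ} (M : Matrix (Fin m) (Fin n) ℝ) (z : Evec m) : Evec m :=
  (Submodule.orthogonalProjection (colSpace M) z : Evec m)

lemma projC_eq_self {m n : ℕ} (M : Matrix (Fin m) (Fin n) ℝ) {z : Evec m}
    (hz : z ∈ colSpace M) : projC M z = z :=
  Submodule.starProjection_eq_self_iff.mpr hz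

lemma sub_projC_mem_orth {m n : ℕ} (M : Matrix (Fin m) (Fin n) ℝ) (z : Evec m) :
    z - projC M z ∈ (colSpace M)ᗮ :=
  Submodule.sub_starProjection_mem_orthogonal z

lemma projC_add {m n : ℕ} (M : Matrix (Fin m) (Fin n) ℝ) (x y : Evec m) :
    projC M (x + y) = projC M x + projC M y := by
  unfold projC; rw [map_add]; rfl

lemma projC_smul {m n : ℕ} (M : Matrix (Fin m) (Fin n) ℝ) (c : ℝ) (x : Evec m) :
    projC M (c • x) = c • projC M x := by
  unfold projC; rw [_root_.map_smul]; rfl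

lemma inner_projC {m n : ℕ} (M : Matrix (Fin m) (Fin n) ℝ) (z : Evec m) :
    ⟪projC M z, z⟫ = ‖projC M z‖ ^ 2 := by
  have h1 : ⟪projC M z, z - projC M z⟫ = 0 := by
    apply Submodule.inner_right_of_mem_orthogonal
      ((Submodule.orthogonalProjection (colSpace M) z).2) (sub_projC_mem_orth M z)
  have h2 : ⟪projC M z, z⟫ = ⟪projC M z, projC M z⟫ + ⟪projC M z, z - projC M z⟫ := by
    rw [← inner_add_right]; congr 1; abel
  rw [h2, h1, add_zero, real_inner_self_eq_norm_sq]

lemma mulVecE_transpose_sub_projC {m n : ℕ} (M : Matrix (Fin m) (Fin n) ℝ) (z : Evec m) :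
    mulVecE Mᵀ (z - projC M z) = 0 := by
  set y : Evec m := z - projC M z with hy
  set ζ : Evec n := mulVecE Mᵀ y with hζ
  have h1 : ⟪ζ, ζ⟫ = ⟪toE y, mulVecE Mᵀᵀ ζ⟫ := inner_mulVecE Mᵀ y ζ
  rw [transpose_transpose] at h1
  have h2 : ⟪toE y, mulVecE M ζ⟫ = 0 := by
    rw [real_inner_comm]
    apply Submodule.inner_right_of_mem_orthogonal (mulVecE_mem_colSpace M ζ)
    exact sub_projC_mem_orth M z
  rw [h2] at h1
  exact inner_self_eq_zero.mp h1

lemma norm_projC_le {m q r : ℕ} (A : Matrix (Fin m) (Fin q) ℝ) (B : Matrix (Fin m) (Fin r) ℝ)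
    (c : ℝ) (hc : 0 ≤ c)
    (hAB : ∀ (u : Fin q → ℝ) (v : Fin r → ℝ),
      ⟪mulVecE A u, mulVecE B v⟫ ≤ c * (‖mulVecE A u‖ * ‖mulVecE B v‖))
    (v : Fin r → ℝ) : ‖projC A (mulVecE B v)‖ ≤ c * ‖mulVecE B v‖ := by
  set z : Evec m := mulVecE B v with hz
  rcases eq_or_ne (‖projC A z‖) 0 with h0 | h0
  · rw [h0]; positivity
  · have hpos : 0 < ‖projC A z‖ := lt_of_le_of_ne (norm_nonneg _) (Ne.symm h0)
    obtain ⟨u', hu'⟩ := (Submodule.orthogonalProjection (colSpace A) z).2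
    have hPz : mulVecE A u' = projC A z := hu'
    have key : ‖projC A z‖ ^ 2 ≤ c * ‖projC A z‖ * ‖z‖ := by
      rw [← inner_projC]
      calc ⟪projC A z, z⟫ = ⟪mulVecE A u', mulVecE B v⟫ := by rw [hPz]
        _ ≤ c * (‖mulVecE A u'‖ * ‖mulVecE B v‖) := hAB u' v
        _ = c * ‖projC A z‖ * ‖z‖ := by rw [hPz]; ring
    nlinarith [key, hpos]

lemma exists_maximizer {p q : ℕ} (C : Matrix (Fin p) (Fin q) ℝ) (hx : 0 < specNorm C) :
    ∃ u : Evec q, ‖u‖ = 1 ∧ ‖mulVecE C u‖ = specNorm C := by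
  have hbdd : BddAbove {x | ∃ u : Fin q → ℝ, vnorm u = 1 ∧ x = vnorm (C.mulVec u)} := by
    refine ⟨specNorm C, ?_⟩
    rintro x ⟨u, hu, rfl⟩
    rw [vnorm_eq_norm] at hu ⊢
    calc ‖toE (C.mulVec u)‖ = ‖mulVecE C (toE u)‖ := rfl
      _ ≤ specNorm C * ‖toE u‖ := norm_mulVecE_le C (toE u)
      _ = specNorm C := by rw [hu, mul_one]
  have hne : {x | ∃ u : Fin q → ℝ, vnorm u = 1 ∧ x = vnorm (C.mulVec u)}.Nonempty := by
    by_contra h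
    rw [Set.not_nonempty_iff_eq_empty] at h
    rw [specNorm, h, Real.sSup_empty] at hx
    exact lt_irrefl 0 hx
  obtain ⟨x0, u0, hu0, -⟩ := hne
  have hu0' : toE u0 ≠ 0 := by
    intro h
    rw [vnorm_eq_norm, h, norm_zero] at hu0
    norm_num at hu0
  haveI : Nontrivial (Evec q) := nontrivial_of_ne (toE u0) 0 hu0'
  have hcompact : IsCompact (Metric.sphere (0 : Evec q) 1) := isCompact_sphere 0 1
  have hsne : (Metric.sphere (0 : Evec q) 1).Nonempty :=
    NormedSpace.sphere_nonempty.mpr zero_le_one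
  have hcont : Continuous (fun u : Evec q => ‖mulVecCLM C u‖) :=
    (mulVecCLM C).continuous.norm
  obtain ⟨u, humem, hmax⟩ := hcompact.exists_isMaxOn hsne hcont.continuousOn
  have hunorm : ‖u‖ = 1 := by rwa [mem_sphere_zero_iff_norm] at humem
  refine ⟨u, hunorm, ?_⟩
  apply le_antisymm
  · calc ‖mulVecE C u‖ = ‖mulVecCLM C u‖ := rfl
      _ ≤ specNorm C * ‖u‖ := norm_mulVecE_le C u
      _ = specNorm C := by rw [hunorm, mul_one]
  · apply Real.sSup_le
    · rintro x ⟨v, hv, rfl⟩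
      rw [vnorm_eq_norm] at hv ⊢
      have hvmem : toE v ∈ Metric.sphere (0 : Evec q) 1 := by
        rw [mem_sphere_zero_iff_norm]; exact hv
      exact hmax hvmem
    · exact norm_nonneg _

lemma maximizer_eigen {p q : ℕ} (C : Matrix (Fin p) (Fin q) ℝ) (u : Evec q)
    (hu : ‖u‖ = 1) (hmax : ‖mulVecE C u‖ = specNorm C) :
    mulVecE Cᵀ (mulVecE C u) = (specNorm C ^ 2) • u := by
  set x := specNorm C with hxdef
  have hKer : ∀ v : Evec q, ⟪mulVecE C u, mulVecE C v⟫ = x ^ 2 * ⟪u, v⟫ := by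
    intro v
    set K : ℝ := ⟪mulVecE C u, mulVecE C v⟫ - x ^ 2 * ⟪u, v⟫ with hK
    set L : ℝ := x ^ 2 * ‖v‖ ^ 2 - ‖mulVecE C v‖ ^ 2 with hL
    have hLnn : 0 ≤ L := by
      have := norm_mulVecE_le C v
      have hxnn : 0 ≤ x := hxdef ▸ specNorm_nonneg_s8 C
      have h2 : ‖mulVecE C v‖ ^ 2 ≤ (x * ‖v‖) ^ 2 := by
        apply sq_le_sq' _ this
        have : -(x * ‖v‖) ≤ 0 := neg_nonpos.mpr (by positivity)
        linarith [norm_nonneg (mulVecE C v)]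
      rw [hL]; nlinarith [h2]
    have hineq : ∀ t : ℝ, 2 * t * K ≤ t ^ 2 * L := by
      intro t
      have hb : ‖mulVecE C (u + t • v)‖ ≤ x * ‖u + t • v‖ := by
        calc ‖mulVecE C (u + t • v)‖ ≤ x * ‖(u + t • v : Evec q)‖ :=
              norm_mulVecE_le C (u + t • v)
          _ = x * ‖u + t • v‖ := rfl
      have hb2 : ‖mulVecE C (u + t • v)‖ ^ 2 ≤ x ^ 2 * ‖u + t • v‖ ^ 2 := by
        have h0 : 0 ≤ ‖mulVecE C (u + t • v)‖ := norm_nonneg _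
        nlinarith [hb, norm_nonneg (u + t • v : Evec q), specNorm_nonneg_s8 C]
      have hsplit : mulVecE C (u + t • v) = mulVecE C u + t • mulVecE C v := by
        have := (mulVecCLM C).map_add u (t • v)
        have h2 := (mulVecCLM C).map_smul t v
        calc mulVecE C (u + t • v) = mulVecCLM C (u + t • v) := rfl
          _ = mulVecCLM C u + t • mulVecCLM C v := by rw [map_add, ContinuousLinearMap.map_smul]
          _ = mulVecE C u + t • mulVecE C v := rfl
      have hlhs : ‖mulVecE C (u + t • v)‖ ^ 2
          = x ^ 2 + 2 * t * ⟪mulVecE C u, mulVecE C v⟫ + t ^ 2 * ‖mulVecE C v‖ ^ 2 := by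
        rw [hsplit, @norm_add_sq_real, real_inner_smul_right, norm_smul, hmax, mul_pow,
          Real.norm_eq_abs, sq_abs]
        ring
      have hrhs : ‖u + t • v‖ ^ 2 = 1 + 2 * t * ⟪u, v⟫ + t ^ 2 * ‖v‖ ^ 2 := by
        rw [@norm_add_sq_real, real_inner_smul_right, norm_smul, hu, mul_pow,
          Real.norm_eq_abs, sq_abs]
        ring
      rw [hlhs, hrhs] at hb2
      rw [hK, hL]; nlinarith [hb2]
    by_contra hne
    have hKne : K ≠ 0 := fun h => hne (by rw [hK] at h; linarith [h])
    have hKpos : 0 < K ^ 2 := by positivity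
    have hLpos : 0 < L + 1 := by linarith
    have ht := hineq (K / (L + 1))
    rw [div_pow] at ht
    have h1 : 2 * (K / (L + 1)) * K = 2 * K ^ 2 / (L + 1) := by ring
    have h2 : K ^ 2 / (L + 1) ^ 2 * L = K ^ 2 * L / (L + 1) ^ 2 := by ring
    rw [h1, h2] at ht
    rw [div_le_div_iff₀ hLpos (by positivity)] at ht
    nlinarith [ht, hKpos, hLnn, hLpos]
  set D : Evec q := mulVecE Cᵀ (mulVecE C u) - (x ^ 2) • u with hD
  have hDzero : ∀ v : Evec q, ⟪D, v⟫ = 0 := by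
    intro v
    rw [hD, inner_sub_left, real_inner_smul_left]
    have h1 : ⟪mulVecE Cᵀ (mulVecE C u), v⟫ = ⟪mulVecE C u, mulVecE C v⟫ := by
      have := inner_mulVecE Cᵀ (mulVecE C u) v
      rw [transpose_transpose] at this
      calc ⟪mulVecE Cᵀ (mulVecE C u), v⟫ = ⟪toE (mulVecE C u), mulVecE C v⟫ := this
        _ = ⟪mulVecE C u, mulVecE C v⟫ := rfl
    rw [h1, hKer v]; ring
  have : D = 0 := by
    have := hDzero D
    rwa [real_inner_self_eq_norm_sq, pow_eq_zero_iff (by norm_num), norm_eq_zero] at this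
  rw [hD, sub_eq_zero] at this
  exact this

lemma quad_bound (m11 m12 m21 m22 A0 B0 y : ℝ) (h12 : 0 ≤ m12) (h21 : 0 ≤ m21)
    (hA : 0 ≤ A0) (hB : 0 ≤ B0) (hAB : 0 < A0 + B0)
    (e1 : y * A0 ≤ m11 * A0 + m12 * B0) (e2 : y * B0 ≤ m21 * A0 + m22 * B0) :
    y ≤ (m11 + m22 + Real.sqrt ((m11 + m22) ^ 2 - 4 * (m11 * m22 - m12 * m21))) / 2 := by
  set Δ : ℝ := (m11 + m22) ^ 2 - 4 * (m11 * m22 - m12 * m21) with hΔdef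
  have hΔ : Δ = (m11 - m22) ^ 2 + 4 * (m12 * m21) := by rw [hΔdef]; ring
  have hΔnn : 0 ≤ Δ := by rw [hΔ]; positivity
  have hsq : Real.sqrt Δ ^ 2 = Δ := Real.sq_sqrt hΔnn
  have habs : |m11 - m22| ≤ Real.sqrt Δ := by
    rw [← Real.sqrt_sq_eq_abs]
    apply Real.sqrt_le_sqrt
    rw [hΔ]; linarith [mul_nonneg h12 h21]
  have hsnn : 0 ≤ Real.sqrt Δ := Real.sqrt_nonneg _
  by_contra hy
  push_neg at hy
  have hy11 : m11 < y := by
    rcases abs_cases (m11 - m22) with ⟨h, _⟩ | ⟨h, _⟩ <;> linarith [habs]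
  have hy22 : m22 < y := by
    rcases abs_cases (m11 - m22) with ⟨h, _⟩ | ⟨h, _⟩ <;> linarith [habs]
  rcases eq_or_lt_of_le hA with hA0 | hA0
  · have hB0 : 0 < B0 := by linarith
    have : y * B0 ≤ m22 * B0 := by nlinarith [e2]
    nlinarith [this, hB0, hy22]
  rcases eq_or_lt_of_le hB with hB0 | hB0
  · have : y * A0 ≤ m11 * A0 := by nlinarith [e1]
    nlinarith [this, hA0, hy11]
  have e1' : (y - m11) * A0 ≤ m12 * B0 := by nlinarith [e1]
  have e2' : (y - m22) * B0 ≤ m21 * A0 := by nlinarith [e2]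
  have hprod : (y - m11) * (y - m22) * (A0 * B0) ≤ (m12 * m21) * (A0 * B0) := by
    calc (y - m11) * (y - m22) * (A0 * B0) = ((y - m11) * A0) * ((y - m22) * B0) := by ring
      _ ≤ (m12 * B0) * (m21 * A0) :=
          mul_le_mul e1' e2' (mul_nonneg (by linarith) hB) (mul_nonneg h12 hB)
      _ = (m12 * m21) * (A0 * B0) := by ring
  have hprod' : (y - m11) * (y - m22) ≤ m12 * m21 :=
    le_of_mul_le_mul_right hprod (by positivity)
  have hygt : Real.sqrt Δ < 2 * y - m11 - m22 := by linarith
  have : Δ < (2 * y - m11 - m22) ^ 2 := by nlinarith [hygt, hsnn]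
  rw [hΔ] at this
  nlinarith [this, hprod']

set_option maxHeartbeats 2000000

/-- with `μ = ‖M₁‖_S`, `ν = ‖M₂‖_S`, `θ` the smallest principal angle
between the column spaces and `η` between the row spaces,
`‖M₁ + M₂‖_S² ≤ (1/2)[μ² + ν² + 2μν cos θ cos η + √((μ²+ν²+2μν cos θ cos η)² − 4μ²ν² sin²θ sin²η)]`. -/
theorem specNorm_add_principal_angle_bound {P Q : ℕ}
    (M1 M2 : Matrix (Fin P) (Fin Q) ℝ) (μ ν θ η : ℝ)
    (hμ : specNorm M1 = μ) (hν : specNorm M2 = ν)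
    (hθmem : θ ∈ Set.Icc 0 (π / 2)) (hηmem : η ∈ Set.Icc 0 (π / 2))
    (hθ : Real.cos θ = sSup (angleSet M1 M2))
    (hη : Real.cos η = sSup (angleSet M1ᵀ M2ᵀ)) :
    specNorm (M1 + M2) ^ 2 ≤
      (1 / 2) * (μ ^ 2 + ν ^ 2 + 2 * μ * ν * Real.cos θ * Real.cos η +
        Real.sqrt ((μ ^ 2 + ν ^ 2 + 2 * μ * ν * Real.cos θ * Real.cos η) ^ 2 -
          4 * μ ^ 2 * ν ^ 2 * Real.sin θ ^ 2 * Real.sin η ^ 2)) := by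
  have hπ := Real.pi_pos
  set cθ := Real.cos θ with hcθdef
  set cη := Real.cos η with hcηdef
  have hcθ0 : 0 ≤ cθ := Real.cos_nonneg_of_mem_Icc ⟨by linarith [hθmem.1], hθmem.2⟩
  have hcη0 : 0 ≤ cη := Real.cos_nonneg_of_mem_Icc ⟨by linarith [hηmem.1], hηmem.2⟩
  clear_value cθ cη
  have hμ0 : 0 ≤ μ := hμ ▸ specNorm_nonneg_s8 M1
  have hν0 : 0 ≤ ν := hν ▸ specNorm_nonneg_s8 M2
  -- the two key 2x2 matrix entries
  set m11 : ℝ := μ ^ 2 + μ * ν * (cθ * cη) with hm11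
  set m12 : ℝ := μ * ν * cη + ν ^ 2 * cθ with hm12
  set m21 : ℝ := μ * ν * cη + μ ^ 2 * cθ with hm21
  set m22 : ℝ := ν ^ 2 + μ * ν * (cθ * cη) with hm22
  have hRHSeq : (m11 + m22 + Real.sqrt ((m11 + m22) ^ 2 - 4 * (m11 * m22 - m12 * m21))) / 2 =
      (1 / 2) * (μ ^ 2 + ν ^ 2 + 2 * μ * ν * cθ * cη +
        Real.sqrt ((μ ^ 2 + ν ^ 2 + 2 * μ * ν * cθ * cη) ^ 2 -
          4 * μ ^ 2 * ν ^ 2 * Real.sin θ ^ 2 * Real.sin η ^ 2)) := by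
    rw [Real.sin_sq θ, Real.sin_sq η, ← hcθdef, ← hcηdef]
    have harg : (m11 + m22) ^ 2 - 4 * (m11 * m22 - m12 * m21) =
        (μ ^ 2 + ν ^ 2 + 2 * μ * ν * cθ * cη) ^ 2 -
          4 * μ ^ 2 * ν ^ 2 * (1 - cθ ^ 2) * (1 - cη ^ 2) := by
      rw [hm11, hm12, hm21, hm22]; ring
    rw [harg, hm11, hm22]; ring
  rw [← hRHSeq]
  clear_value m11 m12 m21 m22
  set x := specNorm (M1 + M2) with hxdef
  have hx0 : 0 ≤ x := specNorm_nonneg_s8 _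
  rcases eq_or_lt_of_le hx0 with hx | hx
  · rw [← hx]
    have h1 : 0 ≤ m11 + m22 := by rw [hm11, hm22]; positivity
    have h2 : 0 ≤ Real.sqrt ((m11 + m22) ^ 2 - 4 * (m11 * m22 - m12 * m21)) :=
      Real.sqrt_nonneg _
    norm_num; linarith
  -- angle inequalities
  have hcol : ∀ (u' v' : Fin Q → ℝ), ⟪mulVecE M1 u', mulVecE M2 v'⟫ ≤
      cθ * (‖mulVecE M1 u'‖ * ‖mulVecE M2 v'‖) :=
    inner_le_csSup_angleSet M1 M2 cθ hcθ0 (le_of_eq hθ.symm)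
  have hcolswap : ∀ (v' u' : Fin Q → ℝ), ⟪mulVecE M2 v', mulVecE M1 u'⟫ ≤
      cθ * (‖mulVecE M2 v'‖ * ‖mulVecE M1 u'‖) := by
    intro v' u'
    rw [real_inner_comm, mul_comm ‖mulVecE M2 v'‖]
    exact hcol u' v'
  have hrow : ∀ (u' v' : Fin P → ℝ), ⟪mulVecE M1ᵀ u', mulVecE M2ᵀ v'⟫ ≤
      cη * (‖mulVecE M1ᵀ u'‖ * ‖mulVecE M2ᵀ v'‖) :=
    inner_le_csSup_angleSet M1ᵀ M2ᵀ cη hcη0 (le_of_eq hη.symm)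
  have hrowswap : ∀ (v' u' : Fin P → ℝ), ⟪mulVecE M2ᵀ v', mulVecE M1ᵀ u'⟫ ≤
      cη * (‖mulVecE M2ᵀ v'‖ * ‖mulVecE M1ᵀ u'‖) := by
    intro v' u'
    rw [real_inner_comm, mul_comm ‖mulVecE M2ᵀ v'‖]
    exact hrow u' v'
  -- maximizing vectors
  obtain ⟨u, hu1, humax⟩ := exists_maximizer (M1 + M2) hx
  rw [← hxdef] at humax
  clear_value x
  set w : Evec P := x⁻¹ • mulVecE (M1 + M2) u with hwdef
  have hxne : x ≠ 0 := ne_of_gt hx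
  have hCu : mulVecE (M1 + M2) u = x • w := by
    rw [hwdef, smul_smul, mul_inv_cancel₀ hxne, one_smul]
  have hw1 : ‖w‖ = 1 := by
    rw [hwdef, norm_smul, norm_inv, Real.norm_eq_abs, abs_of_pos hx, humax,
      inv_mul_cancel₀ hxne]
  have heig := maximizer_eigen (M1 + M2) u hu1 (by rw [humax, hxdef])
  rw [← hxdef] at heig
  have hCTw : mulVecE (M1 + M2)ᵀ w = x • u := by
    have h1 : mulVecE (M1 + M2)ᵀ w = x⁻¹ • mulVecE (M1 + M2)ᵀ (mulVecE (M1 + M2) u) := by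
      rw [hwdef]
      calc mulVecE (M1 + M2)ᵀ (x⁻¹ • mulVecE (M1 + M2) u)
          = mulVecCLM (M1 + M2)ᵀ (x⁻¹ • mulVecE (M1 + M2) u) := rfl
        _ = x⁻¹ • mulVecCLM (M1 + M2)ᵀ (mulVecE (M1 + M2) u) := by
            rw [ContinuousLinearMap.map_smul]
        _ = x⁻¹ • mulVecE (M1 + M2)ᵀ (mulVecE (M1 + M2) u) := rfl
    rw [h1, heig, smul_smul]
    congr 1
    field_simp
  -- splitting
  have hsplitC : ∀ z : Evec Q, mulVecE (M1 + M2) z = mulVecE M1 z + mulVecE M2 z := by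
    intro z
    show toE ((M1 + M2).mulVec z) = _
    rw [add_mulVec]
    rfl
  have hsplitR : ∀ z : Evec P, mulVecE (M1 + M2)ᵀ z = mulVecE M1ᵀ z + mulVecE M2ᵀ z := by
    intro z
    show toE ((M1 + M2)ᵀ.mulVec z) = _
    rw [transpose_add, add_mulVec]
    rfl
  set a : ℝ := ‖mulVecE M1 u‖ with ha
  set b : ℝ := ‖mulVecE M2 u‖ with hb
  set a' : ℝ := ‖mulVecE M1ᵀ w‖ with ha'
  set b' : ℝ := ‖mulVecE M2ᵀ w‖ with hb'
  set s : ℝ := ‖projC M1 w‖ with hs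
  set p : ℝ := ‖projC M2 w‖ with hp
  set t : ℝ := ‖projC M1ᵀ u‖ with ht
  set q : ℝ := ‖projC M2ᵀ u‖ with hq
  have ha0 : 0 ≤ a := norm_nonneg _
  have hb0 : 0 ≤ b := norm_nonneg _
  have ha'0 : 0 ≤ a' := norm_nonneg _
  have hb'0 : 0 ≤ b' := norm_nonneg _
  have hs0 : 0 ≤ s := norm_nonneg _
  have hp0 : 0 ≤ p := norm_nonneg _
  have ht0 : 0 ≤ t := norm_nonneg _
  have hq0 : 0 ≤ q := norm_nonneg _
  clear_value a b a' b' s p t q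
  -- h1 : x * s ≤ a + cθ * b
  have h1 : x * s ≤ a + cθ * b := by
    rw [hs, ha, hb]
    have e : x • projC M1 w = mulVecE M1 u + projC M1 (mulVecE M2 u) := by
      rw [← projC_smul, ← hCu, hsplitC u, projC_add,
        projC_eq_self M1 (mulVecE_mem_colSpace M1 u)]
    calc x * ‖projC M1 w‖ = ‖x • projC M1 w‖ := by
          rw [norm_smul, Real.norm_eq_abs, abs_of_pos hx]
      _ = ‖mulVecE M1 u + projC M1 (mulVecE M2 u)‖ := by rw [e]
      _ ≤ ‖mulVecE M1 u‖ + ‖projC M1 (mulVecE M2 u)‖ := norm_add_le _ _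
      _ ≤ ‖mulVecE M1 u‖ + cθ * ‖mulVecE M2 u‖ := by
          have := norm_projC_le M1 M2 cθ hcθ0 hcol u
          linarith [this]
  have h2 : x * p ≤ b + cθ * a := by
    rw [hp, ha, hb]
    have e : x • projC M2 w = mulVecE M2 u + projC M2 (mulVecE M1 u) := by
      rw [← projC_smul, ← hCu, hsplitC u, projC_add,
        projC_eq_self M2 (mulVecE_mem_colSpace M2 u), add_comm]
    calc x * ‖projC M2 w‖ = ‖x • projC M2 w‖ := by
          rw [norm_smul, Real.norm_eq_abs, abs_of_pos hx]
      _ = ‖mulVecE M2 u + projC M2 (mulVecE M1 u)‖ := by rw [e]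
      _ ≤ ‖mulVecE M2 u‖ + ‖projC M2 (mulVecE M1 u)‖ := norm_add_le _ _
      _ ≤ ‖mulVecE M2 u‖ + cθ * ‖mulVecE M1 u‖ := by
          have := norm_projC_le M2 M1 cθ hcθ0 hcolswap u
          linarith [this]
  have h3 : x * t ≤ a' + cη * b' := by
    rw [ht, ha', hb']
    have e : x • projC M1ᵀ u = mulVecE M1ᵀ w + projC M1ᵀ (mulVecE M2ᵀ w) := by
      rw [← projC_smul, ← hCTw, hsplitR w, projC_add,
        projC_eq_self M1ᵀ (mulVecE_mem_colSpace M1ᵀ w)]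
    calc x * ‖projC M1ᵀ u‖ = ‖x • projC M1ᵀ u‖ := by
          rw [norm_smul, Real.norm_eq_abs, abs_of_pos hx]
      _ = ‖mulVecE M1ᵀ w + projC M1ᵀ (mulVecE M2ᵀ w)‖ := by rw [e]
      _ ≤ ‖mulVecE M1ᵀ w‖ + ‖projC M1ᵀ (mulVecE M2ᵀ w)‖ := norm_add_le _ _
      _ ≤ ‖mulVecE M1ᵀ w‖ + cη * ‖mulVecE M2ᵀ w‖ := by
          have := norm_projC_le M1ᵀ M2ᵀ cη hcη0 hrow w
          linarith [this]
  have h4 : x * q ≤ b' + cη * a' := by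
    rw [hq, ha', hb']
    have e : x • projC M2ᵀ u = mulVecE M2ᵀ w + projC M2ᵀ (mulVecE M1ᵀ w) := by
      rw [← projC_smul, ← hCTw, hsplitR w, projC_add,
        projC_eq_self M2ᵀ (mulVecE_mem_colSpace M2ᵀ w), add_comm]
    calc x * ‖projC M2ᵀ u‖ = ‖x • projC M2ᵀ u‖ := by
          rw [norm_smul, Real.norm_eq_abs, abs_of_pos hx]
      _ = ‖mulVecE M2ᵀ w + projC M2ᵀ (mulVecE M1ᵀ w)‖ := by rw [e]
      _ ≤ ‖mulVecE M2ᵀ w‖ + ‖projC M2ᵀ (mulVecE M1ᵀ w)‖ := norm_add_le _ _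
      _ ≤ ‖mulVecE M2ᵀ w‖ + cη * ‖mulVecE M1ᵀ w‖ := by
          have := norm_projC_le M2ᵀ M1ᵀ cη hcη0 hrowswap w
          linarith [this]
  -- h5 : a' ≤ μ * s
  have h5 : a' ≤ μ * s := by
    have hzero := mulVecE_transpose_sub_projC M1 w
    have e : mulVecE M1ᵀ w = mulVecE M1ᵀ (projC M1 w) := by
      have hw' : projC M1 w + (w - projC M1 w) = w := by abel
      have h'' := congrArg (mulVecCLM M1ᵀ) hw'
      rw [map_add] at h''
      calc mulVecE M1ᵀ w = mulVecCLM M1ᵀ w := rfl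
        _ = mulVecCLM M1ᵀ (projC M1 w) + mulVecCLM M1ᵀ (w - projC M1 w) := h''.symm
        _ = mulVecE M1ᵀ (projC M1 w) + mulVecE M1ᵀ (w - projC M1 w) := rfl
        _ = mulVecE M1ᵀ (projC M1 w) := by rw [hzero, add_zero]
    rw [ha', hs, e, ← hμ]
    exact norm_mulVecE_transpose_le M1 (projC M1 w)
  have h6 : b' ≤ ν * p := by
    have hzero := mulVecE_transpose_sub_projC M2 w
    have e : mulVecE M2ᵀ w = mulVecE M2ᵀ (projC M2 w) := by
      have hw' : projC M2 w + (w - projC M2 w) = w := by abel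
      have h'' := congrArg (mulVecCLM M2ᵀ) hw'
      rw [map_add] at h''
      calc mulVecE M2ᵀ w = mulVecCLM M2ᵀ w := rfl
        _ = mulVecCLM M2ᵀ (projC M2 w) + mulVecCLM M2ᵀ (w - projC M2 w) := h''.symm
        _ = mulVecE M2ᵀ (projC M2 w) + mulVecE M2ᵀ (w - projC M2 w) := rfl
        _ = mulVecE M2ᵀ (projC M2 w) := by rw [hzero, add_zero]
    rw [hb', hp, e, ← hν]
    exact norm_mulVecE_transpose_le M2 (projC M2 w)
  -- h7 : a ≤ μ * t
  have h7 : a ≤ μ * t := by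
    have hzero := mulVecE_transpose_sub_projC M1ᵀ u
    rw [transpose_transpose] at hzero
    have e : mulVecE M1 u = mulVecE M1 (projC M1ᵀ u) := by
      have hu' : projC M1ᵀ u + (u - projC M1ᵀ u) = u := by abel
      have h'' := congrArg (mulVecCLM M1) hu'
      rw [map_add] at h''
      calc mulVecE M1 u = mulVecCLM M1 u := rfl
        _ = mulVecCLM M1 (projC M1ᵀ u) + mulVecCLM M1 (u - projC M1ᵀ u) := h''.symm
        _ = mulVecE M1 (projC M1ᵀ u) + mulVecE M1 (u - projC M1ᵀ u) := rfl
        _ = mulVecE M1 (projC M1ᵀ u) := by rw [hzero, add_zero]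
    rw [ha, ht, e, ← hμ]
    exact norm_mulVecE_le M1 (projC M1ᵀ u)
  have h8 : b ≤ ν * q := by
    have hzero := mulVecE_transpose_sub_projC M2ᵀ u
    rw [transpose_transpose] at hzero
    have e : mulVecE M2 u = mulVecE M2 (projC M2ᵀ u) := by
      have hu' : projC M2ᵀ u + (u - projC M2ᵀ u) = u := by abel
      have h'' := congrArg (mulVecCLM M2) hu'
      rw [map_add] at h''
      calc mulVecE M2 u = mulVecCLM M2 u := rfl
        _ = mulVecCLM M2 (projC M2ᵀ u) + mulVecCLM M2 (u - projC M2ᵀ u) := h''.symm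
        _ = mulVecE M2 (projC M2ᵀ u) + mulVecE M2 (u - projC M2ᵀ u) := rfl
        _ = mulVecE M2 (projC M2ᵀ u) := by rw [hzero, add_zero]
    rw [hb, hq, e, ← hν]
    exact norm_mulVecE_le M2 (projC M2ᵀ u)
  -- h9 : x ≤ a + b
  have h9 : x ≤ a + b := by
    rw [ha, hb, ← humax, hsplitC u]
    exact norm_add_le _ _
  -- assemble
  clear hθ hη hcol hcolswap hrow hrowswap hCu hCTw heig hsplitC hsplitR humax hw1 hu1
  clear hwdef ha hb ha' hb' hs hp ht hq hxdef hμ hν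
  clear_value w
  clear w u M1 M2
  set A0 : ℝ := a + cθ * b with hA0def
  set B0 : ℝ := b + cθ * a with hB0def
  have hA0 : 0 ≤ A0 := by
    rw [hA0def]; exact add_nonneg ha0 (mul_nonneg hcθ0 hb0)
  have hB0 : 0 ≤ B0 := by
    rw [hB0def]; exact add_nonneg hb0 (mul_nonneg hcθ0 ha0)
  have hABpos : 0 < A0 + B0 := by
    have hab : 0 ≤ a + b := by linarith
    have := mul_nonneg hcθ0 hab
    have hexp : cθ * (a + b) = cθ * b + cθ * a := by ring
    have h' : a + b ≤ A0 + B0 := by rw [hA0def, hB0def]; linarith [this, hexp]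
    linarith [h9, hx]
  have kt : x ^ 2 * t ≤ μ * A0 + cη * (ν * B0) := by
    have k1 : x * (x * t) ≤ x * (a' + cη * b') := mul_le_mul_of_nonneg_left h3 hx0
    have k2 : x * a' ≤ μ * A0 := by
      calc x * a' ≤ x * (μ * s) := mul_le_mul_of_nonneg_left h5 hx0
        _ = μ * (x * s) := by ring
        _ ≤ μ * A0 := mul_le_mul_of_nonneg_left h1 hμ0
    have k3 : x * b' ≤ ν * B0 := by
      calc x * b' ≤ x * (ν * p) := mul_le_mul_of_nonneg_left h6 hx0
        _ = ν * (x * p) := by ring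
        _ ≤ ν * B0 := mul_le_mul_of_nonneg_left h2 hν0
    have k3' : cη * (x * b') ≤ cη * (ν * B0) := mul_le_mul_of_nonneg_left k3 hcη0
    have ea : x * (x * t) = x ^ 2 * t := by ring
    have eb : x * (a' + cη * b') = x * a' + cη * (x * b') := by ring
    linarith [k1, k2, k3']
  have kq : x ^ 2 * q ≤ ν * B0 + cη * (μ * A0) := by
    have k1 : x * (x * q) ≤ x * (b' + cη * a') := mul_le_mul_of_nonneg_left h4 hx0
    have k2 : x * a' ≤ μ * A0 := by
      calc x * a' ≤ x * (μ * s) := mul_le_mul_of_nonneg_left h5 hx0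
        _ = μ * (x * s) := by ring
        _ ≤ μ * A0 := mul_le_mul_of_nonneg_left h1 hμ0
    have k3 : x * b' ≤ ν * B0 := by
      calc x * b' ≤ x * (ν * p) := mul_le_mul_of_nonneg_left h6 hx0
        _ = ν * (x * p) := by ring
        _ ≤ ν * B0 := mul_le_mul_of_nonneg_left h2 hν0
    have k2' : cη * (x * a') ≤ cη * (μ * A0) := mul_le_mul_of_nonneg_left k2 hcη0
    have ea : x * (x * q) = x ^ 2 * q := by ring
    have eb : x * (b' + cη * a') = x * b' + cη * (x * a') := by ring
    linarith [k1, k2', k3]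
  have ka : x ^ 2 * a ≤ μ * (μ * A0 + cη * (ν * B0)) := by
    calc x ^ 2 * a ≤ x ^ 2 * (μ * t) := by
          apply mul_le_mul_of_nonneg_left h7 (by positivity)
      _ = μ * (x ^ 2 * t) := by ring
      _ ≤ μ * (μ * A0 + cη * (ν * B0)) := mul_le_mul_of_nonneg_left kt hμ0
  have kb : x ^ 2 * b ≤ ν * (ν * B0 + cη * (μ * A0)) := by
    calc x ^ 2 * b ≤ x ^ 2 * (ν * q) := by
          apply mul_le_mul_of_nonneg_left h8 (by positivity)
      _ = ν * (x ^ 2 * q) := by ring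
      _ ≤ ν * (ν * B0 + cη * (μ * A0)) := mul_le_mul_of_nonneg_left kq hν0
  have e1 : x ^ 2 * A0 ≤ m11 * A0 + m12 * B0 := by
    have : x ^ 2 * A0 = x ^ 2 * a + cθ * (x ^ 2 * b) := by rw [hA0def]; ring
    rw [this, hm11, hm12]
    have kbθ : cθ * (x ^ 2 * b) ≤ cθ * (ν * (ν * B0 + cη * (μ * A0))) :=
      mul_le_mul_of_nonneg_left kb hcθ0
    have eq1 : μ * (μ * A0 + cη * (ν * B0)) + cθ * (ν * (ν * B0 + cη * (μ * A0))) =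
        (μ ^ 2 + μ * ν * (cθ * cη)) * A0 + (μ * ν * cη + ν ^ 2 * cθ) * B0 := by ring
    linarith [ka, kbθ, eq1]
  have e2 : x ^ 2 * B0 ≤ m21 * A0 + m22 * B0 := by
    have : x ^ 2 * B0 = x ^ 2 * b + cθ * (x ^ 2 * a) := by rw [hB0def]; ring
    rw [this, hm21, hm22]
    have kaθ : cθ * (x ^ 2 * a) ≤ cθ * (μ * (μ * A0 + cη * (ν * B0))) :=
      mul_le_mul_of_nonneg_left ka hcθ0
    have eq1 : ν * (ν * B0 + cη * (μ * A0)) + cθ * (μ * (μ * A0 + cη * (ν * B0))) =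
        (μ * ν * cη + μ ^ 2 * cθ) * A0 + (ν ^ 2 + μ * ν * (cθ * cη)) * B0 := by ring
    linarith [kb, kaθ, eq1]
  have h12nn : 0 ≤ m12 := by rw [hm12]; positivity
  have h21nn : 0 ≤ m21 := by rw [hm21]; positivity
  exact quad_bound m11 m12 m21 m22 A0 B0 (x ^ 2) h12nn h21nn hA0 hB0 hABpos e1 e2
end

section
/- For all μ, ν ≥ 0, θ, η ∈ [0, π/2], and α ∈ [0, π/2] with α ≤ η: μ² cos²α + ν² cos²(η−α) + 2μν cos θ cos α cos(η−α) ≤ (1/2)[ μ² + ν² + 2μν cos θ cos η + sqrt( (μ² + ν² + 2μν cos θ cos η)² − 4μ²ν² sin²θ sin²η ) ]. -/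
open Real

private lemma cauchy_step (A B x y : ℝ) (hxy : x ^ 2 + y ^ 2 = 1) :
    A * x + B * y ≤ Real.sqrt (A ^ 2 + B ^ 2) := by
  obtain ⟨r, hr⟩ : ∃ r : ℝ, r = Real.sqrt (A ^ 2 + B ^ 2) := ⟨_, rfl⟩
  have hr0 : 0 ≤ r := hr ▸ Real.sqrt_nonneg _
  have hr2 : r ^ 2 = A ^ 2 + B ^ 2 := by rw [hr]; exact Real.sq_sqrt (by positivity)
  rw [← hr]
  rcases eq_or_lt_of_le hr0 with h0 | hpos
  · have hA0 : A = 0 := by nlinarith [sq_nonneg A, sq_nonneg B]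
    have hB0 : B = 0 := by nlinarith [sq_nonneg A, sq_nonneg B]
    rw [hA0, hB0, ← h0]; norm_num
  · nlinarith [sq_nonneg (A - r * x), sq_nonneg (B - r * y)]

private lemma sqrt_D_eq (μ ν ct st ce se : ℝ)
    (hη1 : se ^ 2 + ce ^ 2 = 1) (hθ1 : st ^ 2 + ct ^ 2 = 1) :
    Real.sqrt ((μ ^ 2 + ν ^ 2 + 2 * μ * ν * ct * ce) ^ 2 -
        4 * μ ^ 2 * ν ^ 2 * st ^ 2 * se ^ 2) =
    2 * Real.sqrt ((μ ^ 2 / 2 + ν ^ 2 * (ce ^ 2 - se ^ 2) / 2 + μ * ν * ct * ce) ^ 2 +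
        (ν ^ 2 * ce * se + μ * ν * ct * se) ^ 2) := by
  have hD : (μ ^ 2 + ν ^ 2 + 2 * μ * ν * ct * ce) ^ 2 -
      4 * μ ^ 2 * ν ^ 2 * st ^ 2 * se ^ 2 =
      2 ^ 2 * ((μ ^ 2 / 2 + ν ^ 2 * (ce ^ 2 - se ^ 2) / 2 + μ * ν * ct * ce) ^ 2 +
        (ν ^ 2 * ce * se + μ * ν * ct * se) ^ 2) := by
    linear_combination (-4 * μ ^ 2 * ν ^ 2 * se ^ 2) * hθ1 +
      (-(ν ^ 2) * (2 * μ ^ 2 + 2 * ν ^ 2 + 4 * μ * ν * ct * ce +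
        ν ^ 2 * (se ^ 2 + ce ^ 2 - 1))) * hη1
  rw [hD, Real.sqrt_mul (by positivity), Real.sqrt_sq (by norm_num : (0:ℝ) ≤ 2)]

private lemma cos_combination_aux (μ ν ct st ce se c s : ℝ)
    (hα1 : s ^ 2 + c ^ 2 = 1) (hη1 : se ^ 2 + ce ^ 2 = 1) (hθ1 : st ^ 2 + ct ^ 2 = 1) :
    μ ^ 2 * c ^ 2 + ν ^ 2 * (ce * c + se * s) ^ 2 +
      2 * μ * ν * ct * c * (ce * c + se * s) ≤
    (1 / 2) * (μ ^ 2 + ν ^ 2 + 2 * μ * ν * ct * ce +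
      Real.sqrt ((μ ^ 2 + ν ^ 2 + 2 * μ * ν * ct * ce) ^ 2 -
        4 * μ ^ 2 * ν ^ 2 * st ^ 2 * se ^ 2)) := by
  have hxy : (c ^ 2 - s ^ 2) ^ 2 + (2 * c * s) ^ 2 = 1 := by
    linear_combination (s ^ 2 + c ^ 2 + 1) * hα1
  have hstep := cauchy_step (μ ^ 2 / 2 + ν ^ 2 * (ce ^ 2 - se ^ 2) / 2 + μ * ν * ct * ce)
    (ν ^ 2 * ce * se + μ * ν * ct * se) (c ^ 2 - s ^ 2) (2 * c * s) hxy
  have heq : μ ^ 2 * c ^ 2 + ν ^ 2 * (ce * c + se * s) ^ 2 +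
      2 * μ * ν * ct * c * (ce * c + se * s) =
      (μ ^ 2 / 2 + ν ^ 2 / 2 + μ * ν * ct * ce) +
      ((μ ^ 2 / 2 + ν ^ 2 * (ce ^ 2 - se ^ 2) / 2 + μ * ν * ct * ce) * (c ^ 2 - s ^ 2) +
        (ν ^ 2 * ce * se + μ * ν * ct * se) * (2 * c * s)) := by
    linear_combination (μ ^ 2 / 2 + ν ^ 2 * (ce ^ 2 + se ^ 2) / 2 + μ * ν * ct * ce) * hα1 +
      (ν ^ 2 / 2) * hη1
  rw [heq, sqrt_D_eq μ ν ct st ce se hη1 hθ1]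
  linarith [hstep]

/-- the real-analytic inequality behind the spectral norm bound for
a sum of two matrices. -/
theorem cos_combination_le {μ ν θ η α : ℝ} (hμ : 0 ≤ μ) (hν : 0 ≤ ν)
    (hθ : θ ∈ Set.Icc 0 (π / 2)) (hη : η ∈ Set.Icc 0 (π / 2))
    (hα : α ∈ Set.Icc 0 (π / 2)) (hαη : α ≤ η) :
    μ ^ 2 * Real.cos α ^ 2 + ν ^ 2 * Real.cos (η - α) ^ 2 +
      2 * μ * ν * Real.cos θ * Real.cos α * Real.cos (η - α) ≤
    (1 / 2) * (μ ^ 2 + ν ^ 2 + 2 * μ * ν * Real.cos θ * Real.cos η +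
      Real.sqrt ((μ ^ 2 + ν ^ 2 + 2 * μ * ν * Real.cos θ * Real.cos η) ^ 2 -
        4 * μ ^ 2 * ν ^ 2 * Real.sin θ ^ 2 * Real.sin η ^ 2)) := by
  have h := cos_combination_aux μ ν (Real.cos θ) (Real.sin θ) (Real.cos η) (Real.sin η)
    (Real.cos α) (Real.sin α) (Real.sin_sq_add_cos_sq α) (Real.sin_sq_add_cos_sq η)
    (Real.sin_sq_add_cos_sq θ)
  rw [Real.cos_sub]
  exact h
end
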